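/- arXiv:1603.06167 — 7 statements merged into one kernel-verified Lean document; each statement's English description precedes it below -/
import Mathlib

section
/- Every parallel refractor u from Ω to Σ satisfies the uniform Lipschitz estimate |u(x₂) − u(x₁)| ≤ |x₂ − x₁|/√(κ²−1) for all x₁, x₂ ∈ Ω; in particular, parallel refractors are Lipschitz with a constant depending only on κ. -/
noncomputable section

open scoped RealInnerProductSpace

/-- ℝⁿ with the Euclidean norm. -/
abbrev E (n : ℕ) : Type := EuclideanSpace ℝ (Fin n)

/-- Euclidean norm of a point of ℝ^{n+1} = ℝⁿ × ℝ. -/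
def pnorm {n : ℕ} (W : E n × ℝ) : ℝ := Real.sqrt (‖W.1‖ ^ 2 + W.2 ^ 2)

/-- c(X,Y) = κ(y_{n+1} − x_{n+1}) − |X − Y|. -/
def cfun {n : ℕ} (κ : ℝ) (X Y : E n × ℝ) : ℝ := κ * (Y.2 - X.2) - pnorm (X - Y)

/-- φ_{Y,b}(x): lower sheet of the two-sheeted hyperboloid with upper focus Y. -/
def hypb {n : ℕ} (κ : ℝ) (Y : E n × ℝ) (b : ℝ) (x : E n) : ℝ :=
  Y.2 - κ * b / (κ ^ 2 - 1) -
    Real.sqrt (b ^ 2 / (κ ^ 2 - 1) ^ 2 + ‖x - Y.1‖ ^ 2 / (κ ^ 2 - 1))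

/-- φ(x, Y, X₀) = φ_{Y, c(X₀,Y)}(x). -/
def hyp {n : ℕ} (κ : ℝ) (x : E n) (Y X₀ : E n × ℝ) : ℝ := hypb κ Y (cfun κ X₀ Y) x


lemma sqrt_lip (c s t : ℝ) (hc : 0 ≤ c) :
    Real.sqrt (c + s ^ 2) - Real.sqrt (c + t ^ 2) ≤ |s - t| := by
  have h1 : Real.sqrt (c + s ^ 2) ≤ Real.sqrt (c + t ^ 2) + |s - t| := by
    rw [Real.sqrt_le_iff]
    constructor
    · positivity
    · have ht : |t| ≤ Real.sqrt (c + t ^ 2) := by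
        rw [← Real.sqrt_sq_eq_abs]
        exact Real.sqrt_le_sqrt (by nlinarith)
      have hnn : 0 ≤ Real.sqrt (c + t ^ 2) := Real.sqrt_nonneg _
      have hsq : Real.sqrt (c + t ^ 2) ^ 2 = c + t ^ 2 :=
        Real.sq_sqrt (by positivity)
      have h2 : t * (s - t) ≤ |t| * |s - t| := by
        calc t * (s - t) ≤ |t * (s - t)| := le_abs_self _
        _ = |t| * |s - t| := abs_mul _ _
      nlinarith [abs_nonneg (s - t), sq_abs (s - t)]
  linarith

lemma hypb_lip {n : ℕ} {κ : ℝ} (hκ : 1 < κ) (Y : E n × ℝ) (b : ℝ) (x₁ x₂ : E n) :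
    hypb κ Y b x₁ - hypb κ Y b x₂ ≤ ‖x₂ - x₁‖ / Real.sqrt (κ ^ 2 - 1) := by
  have hm : 0 < κ ^ 2 - 1 := by nlinarith
  have hms : 0 < Real.sqrt (κ ^ 2 - 1) := Real.sqrt_pos.2 hm
  have key : ∀ x : E n, b ^ 2 / (κ ^ 2 - 1) ^ 2 + ‖x - Y.1‖ ^ 2 / (κ ^ 2 - 1)
      = (b ^ 2 / (κ ^ 2 - 1) + ‖x - Y.1‖ ^ 2) / (κ ^ 2 - 1) := by
    intro x; field_simp
  have hd : ∀ x : E n,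
      Real.sqrt (b ^ 2 / (κ ^ 2 - 1) ^ 2 + ‖x - Y.1‖ ^ 2 / (κ ^ 2 - 1))
      = Real.sqrt (b ^ 2 / (κ ^ 2 - 1) + ‖x - Y.1‖ ^ 2) / Real.sqrt (κ ^ 2 - 1) := by
    intro x
    rw [key x, Real.sqrt_div (by positivity)]
  have hc : (0:ℝ) ≤ b ^ 2 / (κ ^ 2 - 1) := by positivity
  have h1 := sqrt_lip (b ^ 2 / (κ ^ 2 - 1)) ‖x₂ - Y.1‖ ‖x₁ - Y.1‖ hc
  have h2 : |‖x₂ - Y.1‖ - ‖x₁ - Y.1‖| ≤ ‖x₂ - x₁‖ := by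
    have := abs_norm_sub_norm_le (x₂ - Y.1) (x₁ - Y.1)
    simpa using this
  have h3 : Real.sqrt (b ^ 2 / (κ ^ 2 - 1) + ‖x₂ - Y.1‖ ^ 2)
      - Real.sqrt (b ^ 2 / (κ ^ 2 - 1) + ‖x₁ - Y.1‖ ^ 2) ≤ ‖x₂ - x₁‖ := by
    linarith
  unfold hypb
  rw [hd x₁, hd x₂]
  have heq : Y.2 - κ * b / (κ ^ 2 - 1) - Real.sqrt (b ^ 2 / (κ ^ 2 - 1) + ‖x₁ - Y.1‖ ^ 2) / Real.sqrt (κ ^ 2 - 1) -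
      (Y.2 - κ * b / (κ ^ 2 - 1) - Real.sqrt (b ^ 2 / (κ ^ 2 - 1) + ‖x₂ - Y.1‖ ^ 2) / Real.sqrt (κ ^ 2 - 1))
      = (Real.sqrt (b ^ 2 / (κ ^ 2 - 1) + ‖x₂ - Y.1‖ ^ 2) - Real.sqrt (b ^ 2 / (κ ^ 2 - 1) + ‖x₁ - Y.1‖ ^ 2)) / Real.sqrt (κ ^ 2 - 1) := by
    ring
  rw [heq]
  gcongr

/-- parallel refractors are uniformly Lipschitz with constant 1/√(κ²−1). -/
theorem stmt_1 {n : ℕ} (hn : 1 ≤ n) (κ : ℝ) (hκ : 1 < κ)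
    (Ω : Set (E n)) (hΩo : IsOpen Ω) (hΩb : Bornology.IsBounded Ω) (hΩne : Ω.Nonempty)
    (Tgt : Set (E n × ℝ)) (hTc : IsCompact Tgt) (hTne : Tgt.Nonempty)
    (hTpos : ∀ Y ∈ Tgt, 0 < Y.2)
    (Δ : ℝ) (hΔ : ∀ Y ∈ Tgt, Metric.diam (Ω ∪ {Y.1}) ≤ Δ)
    (hinf : ∀ Y ∈ Tgt, Δ / Real.sqrt (κ ^ 2 - 1) < Y.2)
    (u : E n → ℝ) (hupos : ∀ x ∈ Ω, 0 < u x)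
    (hu : ∀ x₀ ∈ Ω, ∃ Y ∈ Tgt, ∃ b : ℝ, 0 < b ∧
      b < κ * Y.2 - Real.sqrt (Y.2 ^ 2 + Δ ^ 2) ∧
      (∀ x ∈ Ω, hypb κ Y b x ≤ u x) ∧ u x₀ = hypb κ Y b x₀) :
    ∀ x₁ ∈ Ω, ∀ x₂ ∈ Ω, |u x₂ - u x₁| ≤ ‖x₂ - x₁‖ / Real.sqrt (κ ^ 2 - 1) := by
  intro x₁ h₁ x₂ h₂
  rw [abs_sub_le_iff]
  constructor
  · obtain ⟨Y, -, b, -, -, hle, heq⟩ := hu x₂ h₂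
    have := hypb_lip hκ Y b x₂ x₁
    have h4 := hle x₁ h₁
    rw [norm_sub_rev] at this
    linarith [heq ▸ this]
  · obtain ⟨Y, -, b, -, -, hle, heq⟩ := hu x₁ h₁
    have := hypb_lip hκ Y b x₁ x₂
    have h4 := hle x₂ h₂
    linarith [heq ▸ this]
end
end

section
/- Let κ > 1, x ∈ ℝⁿ, and Y = (y, y_{n+1}) ∈ ℝ^{n+1}. At every X₀ = (x₀, x⁰_{n+1}) with c(X₀,Y) > 0 and X₀ ≠ Y, the partial derivative of φ(x, Y, X₀) with respect to the last coordinate x⁰_{n+1} of X₀ satisfies |∂φ/∂x⁰_{n+1}(x, Y, X₀)| ≤ (κ+1)/(κ−1). -/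
noncomputable section

open scoped RealInnerProductSpace

/-- bound for the derivative of φ in the last coordinate of X₀. -/
theorem stmt_2 {n : ℕ} (hn : 1 ≤ n) (κ : ℝ) (hκ : 1 < κ)
    (x : E n) (Y X₀ : E n × ℝ) (hc : 0 < cfun κ X₀ Y) (hne : X₀ ≠ Y) :
    DifferentiableAt ℝ (fun t : ℝ => hyp κ x Y (X₀.1, t)) X₀.2 ∧
    |deriv (fun t : ℝ => hyp κ x Y (X₀.1, t)) X₀.2| ≤ (κ + 1) / (κ - 1) := by
  have hκ2 : (0:ℝ) < κ ^ 2 - 1 := by nlinarith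
  set A : ℝ := ‖X₀.1 - Y.1‖ ^ 2 with hAdef
  set B : ℝ := ‖x - Y.1‖ ^ 2 with hBdef
  have hA0 : 0 ≤ A := sq_nonneg _
  have hB0 : 0 ≤ B := sq_nonneg _
  set d : ℝ := X₀.2 - Y.2 with hddef
  have hAd : 0 < A + d ^ 2 := by
    rcases eq_or_ne X₀.1 Y.1 with h1 | h1
    · have h2 : X₀.2 ≠ Y.2 := by
        intro h2; exact hne (Prod.ext h1 h2)
      have : d ≠ 0 := sub_ne_zero.mpr h2
      have h3 : 0 < d ^ 2 := by positivity
      nlinarith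
    · have : (0:ℝ) < ‖X₀.1 - Y.1‖ := by
        rw [norm_pos_iff]; exact sub_ne_zero.mpr h1
      nlinarith [sq_nonneg d]
  set s : ℝ := Real.sqrt (A + d ^ 2) with hsdef
  have hs0 : 0 < s := Real.sqrt_pos.mpr hAd
  set b₀ : ℝ := cfun κ X₀ Y with hbdef
  have hb₀ : b₀ = κ * (Y.2 - X₀.2) - s := rfl
  set G : ℝ → ℝ := fun t => κ * (Y.2 - t) - Real.sqrt (A + (t - Y.2) ^ 2) with hGdef
  set r : ℝ := Real.sqrt (b₀ ^ 2 / (κ ^ 2 - 1) ^ 2 + B / (κ ^ 2 - 1)) with hrdef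
  have hr0 : 0 < r := by
    apply Real.sqrt_pos.mpr
    have : 0 < b₀ ^ 2 / (κ ^ 2 - 1) ^ 2 := by positivity
    have : 0 ≤ B / (κ ^ 2 - 1) := by positivity
    linarith
  set F : ℝ → ℝ := fun u =>
    Y.2 - κ * u / (κ ^ 2 - 1) - Real.sqrt (u ^ 2 / (κ ^ 2 - 1) ^ 2 + B / (κ ^ 2 - 1)) with hFdef
  have hfun : (fun t : ℝ => hyp κ x Y (X₀.1, t)) = fun t => F (G t) := rfl
  -- derivative of G
  have hGb : G X₀.2 = b₀ := by simp [hGdef, hb₀, hsdef, hddef]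
  have hG' : HasDerivAt G (-κ - d / s) X₀.2 := by
    have h1 : HasDerivAt (fun t : ℝ => A + (t - Y.2) ^ 2) (2 * d) X₀.2 := by
      have := (((hasDerivAt_id X₀.2).sub_const Y.2).pow 2).const_add A
      refine this.congr_deriv ?_
      simp [hddef]
    have h2 : HasDerivAt (fun t : ℝ => Real.sqrt (A + (t - Y.2) ^ 2))
        (1 / (2 * s) * (2 * d)) X₀.2 := by
      have := (Real.hasDerivAt_sqrt hAd.ne').comp X₀.2 h1
      exact this
    have h3 : HasDerivAt (fun t : ℝ => κ * (Y.2 - t)) (-κ) X₀.2 := by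
      have := ((hasDerivAt_const X₀.2 Y.2).sub (hasDerivAt_id X₀.2)).const_mul κ
      refine this.congr_deriv ?_; ring
    have := h3.sub h2
    refine this.congr_deriv ?_
    field_simp
  -- derivative of F
  have hF' : HasDerivAt F (-(κ / (κ ^ 2 - 1)) - b₀ / ((κ ^ 2 - 1) ^ 2 * r)) b₀ := by
    have harg : (0:ℝ) < b₀ ^ 2 / (κ ^ 2 - 1) ^ 2 + B / (κ ^ 2 - 1) := Real.sqrt_pos.mp hr0
    have h1 : HasDerivAt (fun u : ℝ => u ^ 2 / (κ ^ 2 - 1) ^ 2 + B / (κ ^ 2 - 1))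
        (2 * b₀ / (κ ^ 2 - 1) ^ 2) b₀ := by
      have := ((hasDerivAt_pow 2 b₀).div_const ((κ ^ 2 - 1) ^ 2)).add_const (B / (κ ^ 2 - 1))
      refine this.congr_deriv ?_
      ring
    have h2 : HasDerivAt (fun u : ℝ =>
        Real.sqrt (u ^ 2 / (κ ^ 2 - 1) ^ 2 + B / (κ ^ 2 - 1)))
        (1 / (2 * r) * (2 * b₀ / (κ ^ 2 - 1) ^ 2)) b₀ := by
      have := (Real.hasDerivAt_sqrt harg.ne').comp b₀ h1
      exact this
    have h3 : HasDerivAt (fun u : ℝ => Y.2 - κ * u / (κ ^ 2 - 1))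
        (-(κ / (κ ^ 2 - 1))) b₀ := by
      have := (hasDerivAt_const b₀ Y.2).sub
        (((hasDerivAt_id b₀).const_mul κ).div_const (κ ^ 2 - 1))
      refine this.congr_deriv ?_; ring
    have := h3.sub h2
    refine this.congr_deriv ?_
    field_simp
  have hcomp : HasDerivAt (fun t : ℝ => F (G t))
      ((-(κ / (κ ^ 2 - 1)) - b₀ / ((κ ^ 2 - 1) ^ 2 * r)) * (-κ - d / s)) X₀.2 := by
    have hF2 : HasDerivAt F (-(κ / (κ ^ 2 - 1)) - b₀ / ((κ ^ 2 - 1) ^ 2 * r)) (G X₀.2) := by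
      rw [hGb]; exact hF'
    exact hF2.comp X₀.2 hG'
  rw [hfun]
  refine ⟨hcomp.differentiableAt, ?_⟩
  rw [hcomp.deriv]
  -- bounds
  have hd_le : |d| ≤ s := by
    rw [hsdef, ← Real.sqrt_sq_eq_abs]
    exact Real.sqrt_le_sqrt (by linarith)
  have hGbound : |(-κ - d / s)| ≤ κ + 1 := by
    have : |d / s| ≤ 1 := by
      rw [abs_div, abs_of_pos hs0]
      exact (div_le_one hs0).mpr hd_le
    calc |(-κ - d / s)| ≤ |(-κ)| + |d / s| := abs_sub _ _
      _ ≤ κ + 1 := by rw [abs_neg, abs_of_pos (by linarith : (0:ℝ) < κ)]; linarith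
  have hr_ge : b₀ / (κ ^ 2 - 1) ≤ r := by
    have h1 : b₀ ^ 2 / (κ ^ 2 - 1) ^ 2 = (b₀ / (κ ^ 2 - 1)) ^ 2 := by
      rw [div_pow]
    rw [hrdef, h1]
    calc b₀ / (κ ^ 2 - 1) = Real.sqrt ((b₀ / (κ ^ 2 - 1)) ^ 2) := by
          rw [Real.sqrt_sq (by positivity)]
      _ ≤ _ := Real.sqrt_le_sqrt (le_add_of_nonneg_right (by positivity))
  have hterm : b₀ / ((κ ^ 2 - 1) ^ 2 * r) ≤ 1 / (κ ^ 2 - 1) := by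
    rw [div_le_div_iff₀ (by positivity) (by positivity)]
    have : b₀ ≤ (κ ^ 2 - 1) * r := by
      rw [div_le_iff₀ hκ2] at hr_ge; linarith
    nlinarith
  have hFbound : |(-(κ / (κ ^ 2 - 1)) - b₀ / ((κ ^ 2 - 1) ^ 2 * r))| ≤ (κ + 1) / (κ ^ 2 - 1) := by
    have hpos1 : 0 < κ / (κ ^ 2 - 1) := by positivity
    have hpos2 : 0 < b₀ / ((κ ^ 2 - 1) ^ 2 * r) := by positivity
    rw [abs_of_nonpos (by linarith), neg_sub, sub_neg_eq_add]
    have : κ / (κ ^ 2 - 1) + 1 / (κ ^ 2 - 1) = (κ + 1) / (κ ^ 2 - 1) := by ring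
    linarith
  calc |(-(κ / (κ ^ 2 - 1)) - b₀ / ((κ ^ 2 - 1) ^ 2 * r)) * (-κ - d / s)|
      = |(-(κ / (κ ^ 2 - 1)) - b₀ / ((κ ^ 2 - 1) ^ 2 * r))| * |(-κ - d / s)| := abs_mul _ _
    _ ≤ (κ + 1) / (κ ^ 2 - 1) * (κ + 1) :=
        mul_le_mul hFbound hGbound (abs_nonneg _) (by positivity)
    _ = (κ + 1) / (κ - 1) := by
        rw [div_mul_eq_mul_div, div_eq_div_iff (by positivity) (by linarith)]
        ring
end
end

section
/- Under the structural setup, let X̄ ∈ C_Ω, Y ∈ Σ, x₀ ∈ Ω, set X₀ = (x₀, φ(x₀, Y, X̄)), and assume X₀* = (x₀, φ(x₀, Y, X̄) + h) ∈ C_Ω for some h > 0. Then 0 ≤ φ(x, Y, X₀*) − φ(x, Y, X₀) ≤ ((κ+1)/(κ−1))·h for all x ∈ Ω. -/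
noncomputable section

open scoped RealInnerProductSpace

/-- 1-Lipschitz estimate for `u ↦ √(u² + R)`. -/
lemma sqlip (u v R : ℝ) (hR : 0 ≤ R) :
    |Real.sqrt (u ^ 2 + R) - Real.sqrt (v ^ 2 + R)| ≤ |u - v| := by
  have h1 : Real.sqrt (u ^ 2 + R) ^ 2 = u ^ 2 + R := Real.sq_sqrt (by positivity)
  have h2 : Real.sqrt (v ^ 2 + R) ^ 2 = v ^ 2 + R := Real.sq_sqrt (by positivity)
  have h3 : 0 ≤ Real.sqrt (u ^ 2 + R) := Real.sqrt_nonneg _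
  have h4 : 0 ≤ Real.sqrt (v ^ 2 + R) := Real.sqrt_nonneg _
  have h5 : |u| ≤ Real.sqrt (u ^ 2 + R) := by
    rw [← Real.sqrt_sq_eq_abs]; exact Real.sqrt_le_sqrt (by linarith)
  have h6 : |v| ≤ Real.sqrt (v ^ 2 + R) := by
    rw [← Real.sqrt_sq_eq_abs]; exact Real.sqrt_le_sqrt (by linarith)
  have h7 : |u| - |v| ≤ |u - v| := abs_sub_abs_le_abs_sub u v
  have h8 : |v| - |u| ≤ |u - v| := by
    simpa [abs_sub_comm] using abs_sub_abs_le_abs_sub v u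
  rw [abs_sub_le_iff]
  constructor
  · nlinarith [sq_abs u, sq_abs v, abs_nonneg u, abs_nonneg v, abs_nonneg (u - v)]
  · nlinarith [sq_abs u, sq_abs v, abs_nonneg u, abs_nonneg v, abs_nonneg (u - v)]

/-- monotonicity and continuity in the height of the base point
(Lemma on raising the focus-defining point). -/
theorem stmt_6 {n : ℕ} (hn : 1 ≤ n) (κ : ℝ) (hκ : 1 < κ)
    (Ω : Set (E n)) (hΩo : IsOpen Ω) (hΩconv : Convex ℝ Ω)
    (hΩb : Bornology.IsBounded Ω) (hΩne : Ω.Nonempty)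
    (Tgt : Set (E n × ℝ)) (hTc : IsCompact Tgt) (hTne : Tgt.Nonempty)
    (τ₀ τ₁ ω Δ : ℝ) (hτ₀ : 0 < τ₀) (hτ : τ₀ < τ₁) (hω : 0 < ω) (hΔpos : 0 < Δ)
    (hslab : ∀ Y ∈ Tgt, Y.2 ∈ Set.Icc τ₁ (τ₁ + ω))
    (hΔ : ∀ Y ∈ Tgt, Metric.diam (Ω ∪ {Y.1}) ≤ Δ)
    (hcompat : max (κ * τ₀) (τ₀ + κ * Δ / (κ - 1)) ≤ τ₁)
    (Xbar : E n × ℝ) (hXbar : Xbar.1 ∈ Ω ∧ Xbar.2 ∈ Set.Icc 0 τ₀)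
    (Y : E n × ℝ) (hY : Y ∈ Tgt) (x₀ : E n) (hx₀ : x₀ ∈ Ω) (h : ℝ) (hh : 0 < h)
    (hX₀s : x₀ ∈ Ω ∧ hyp κ x₀ Y Xbar + h ∈ Set.Icc 0 τ₀) :
    ∀ x ∈ Ω,
      0 ≤ hyp κ x Y (x₀, hyp κ x₀ Y Xbar + h) - hyp κ x Y (x₀, hyp κ x₀ Y Xbar) ∧
      hyp κ x Y (x₀, hyp κ x₀ Y Xbar + h) - hyp κ x Y (x₀, hyp κ x₀ Y Xbar)
        ≤ (κ + 1) / (κ - 1) * h := by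
  intro x hx
  have hκ1 : (0:ℝ) < κ - 1 := by linarith
  have hκ2 : (0:ℝ) < κ + 1 := by linarith
  have hc : (0:ℝ) < κ ^ 2 - 1 := by nlinarith
  set t := hyp κ x₀ Y Xbar with ht
  set P₁ := pnorm ((x₀, t) - Y) with hP₁
  set P₂ := pnorm ((x₀, t + h) - Y) with hP₂
  -- the pnorm changes by at most h
  have hPd : |P₂ - P₁| ≤ h := by
    have h0 : (0:ℝ) ≤ ‖x₀ - Y.1‖ ^ 2 := by positivity
    have key := sqlip (t + h - Y.2) (t - Y.2) (‖x₀ - Y.1‖ ^ 2) h0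
    rw [show t + h - Y.2 - (t - Y.2) = h by ring, abs_of_pos hh] at key
    have e2 : P₂ = Real.sqrt ((t + h - Y.2) ^ 2 + ‖x₀ - Y.1‖ ^ 2) := by
      simp [hP₂, pnorm, add_comm]
    have e1 : P₁ = Real.sqrt ((t - Y.2) ^ 2 + ‖x₀ - Y.1‖ ^ 2) := by
      simp [hP₁, pnorm, add_comm]
    rw [e1, e2]; exact key
  set b₁ := cfun κ (x₀, t) Y with hb₁
  set b₂ := cfun κ (x₀, t + h) Y with hb₂
  have hbd : b₁ - b₂ = κ * h + (P₂ - P₁) := by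
    simp only [hb₁, hb₂, cfun]; ring
  have habs := abs_le.mp hPd
  have hd1 : (κ - 1) * h ≤ b₁ - b₂ := by rw [hbd]; linarith
  have hd2 : b₁ - b₂ ≤ (κ + 1) * h := by rw [hbd]; linarith
  have hd0 : 0 ≤ b₁ - b₂ := le_trans (by positivity) hd1
  -- the sqrt terms
  set R' := ‖x - Y.1‖ ^ 2 / (κ ^ 2 - 1) with hR'
  have hR'0 : 0 ≤ R' := by positivity
  set S₁ := Real.sqrt ((b₁ / (κ ^ 2 - 1)) ^ 2 + R') with hS₁
  set S₂ := Real.sqrt ((b₂ / (κ ^ 2 - 1)) ^ 2 + R') with hS₂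
  have hSd : |S₁ - S₂| ≤ (b₁ - b₂) / (κ ^ 2 - 1) := by
    have key := sqlip (b₁ / (κ ^ 2 - 1)) (b₂ / (κ ^ 2 - 1)) R' hR'0
    have habs2 : |(b₁ - b₂) / (κ ^ 2 - 1)| = (b₁ - b₂) / (κ ^ 2 - 1) :=
      abs_of_nonneg (div_nonneg hd0 hc.le)
    rw [show b₁ / (κ ^ 2 - 1) - b₂ / (κ ^ 2 - 1) = (b₁ - b₂) / (κ ^ 2 - 1) by ring,
      habs2] at key
    exact key
  have hSabs := abs_le.mp hSd
  -- express the difference of hyperboloids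
  have ed : hyp κ x Y (x₀, t + h) - hyp κ x Y (x₀, t)
      = κ * ((b₁ - b₂) / (κ ^ 2 - 1)) + (S₁ - S₂) := by
    simp only [hyp, hypb, ← hb₁, ← hb₂, hS₁, hS₂, div_pow, hR']
    ring
  set q := (b₁ - b₂) / (κ ^ 2 - 1) with hq
  have hq1 : (κ - 1) * h / (κ ^ 2 - 1) ≤ q := by
    apply div_le_div_of_nonneg_right hd1 hc.le |>.trans_eq rfl
  have hq2 : q ≤ (κ + 1) * h / (κ ^ 2 - 1) :=
    div_le_div_of_nonneg_right hd2 hc.le |>.trans_eq rfl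
  have hq0 : 0 ≤ q := by positivity
  constructor
  · rw [ed]
    have : q ≤ κ * q := le_mul_of_one_le_left hq0 (le_of_lt hκ)
    linarith [hSabs.1]
  · rw [ed]
    have h1 : κ * q + (S₁ - S₂) ≤ (κ + 1) * q := by linarith [hSabs.2]
    have h2 : (κ + 1) * q ≤ (κ + 1) / (κ - 1) * h := by
      have hle : (κ + 1) * (b₁ - b₂) ≤ (κ + 1) * ((κ + 1) * h) :=
        mul_le_mul_of_nonneg_left hd2 (le_of_lt hκ2)
      rw [hq, mul_div_assoc', div_le_iff₀ hc]
      calc (κ + 1) * (b₁ - b₂) ≤ (κ + 1) * ((κ + 1) * h) := hle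
        _ = (κ + 1) / (κ - 1) * h * (κ ^ 2 - 1) := by
            field_simp; ring
    linarith
end
end

section
/- Under the structural setup, there exists a constant C > 0 (depending only on κ, Δ, τ₀, τ₁, ω) such that for all Y, Ȳ ∈ Σ, all X₀ = (x₀, x⁰_{n+1}) ∈ C_Ω, and all x ∈ Ω: |φ(x, Y, X₀) − φ(x, Ȳ, X₀)| ≤ C|x − x₀||Y − Ȳ|. -/
noncomputable section

open scoped RealInnerProductSpace

lemma pnorm_nonneg' {n : ℕ} (W : E n × ℝ) : 0 ≤ pnorm W := Real.sqrt_nonneg _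

lemma fst_le_pnorm {n : ℕ} (W : E n × ℝ) : ‖W.1‖ ≤ pnorm W := by
  have := Real.sqrt_le_sqrt (show ‖W.1‖^2 ≤ ‖W.1‖^2 + W.2^2 by nlinarith [sq_nonneg W.2])
  rwa [Real.sqrt_sq (norm_nonneg _)] at this

lemma snd_le_pnorm {n : ℕ} (W : E n × ℝ) : |W.2| ≤ pnorm W := by
  have := Real.sqrt_le_sqrt (show W.2^2 ≤ ‖W.1‖^2 + W.2^2 by nlinarith [sq_nonneg ‖W.1‖])
  rwa [Real.sqrt_sq_eq_abs] at this

lemma pnorm_neg' {n : ℕ} (W : E n × ℝ) : pnorm (-W) = pnorm W := by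
  simp [pnorm]

lemma pnorm_le_add {n : ℕ} (W : E n × ℝ) : pnorm W ≤ ‖W.1‖ + |W.2| := by
  have := Real.sqrt_le_sqrt (show ‖W.1‖^2 + W.2^2 ≤ (‖W.1‖ + |W.2|)^2 by
    nlinarith [mul_nonneg (norm_nonneg W.1) (abs_nonneg W.2), sq_abs W.2])
  rwa [Real.sqrt_sq (by positivity)] at this

lemma sqrt2_add_le (a b c d : ℝ) :
    Real.sqrt ((a+c)^2 + (b+d)^2) ≤ Real.sqrt (a^2+b^2) + Real.sqrt (c^2+d^2) := by
  have h1 := Real.sq_sqrt (by positivity : (0:ℝ) ≤ a^2+b^2)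
  have h2 := Real.sq_sqrt (by positivity : (0:ℝ) ≤ c^2+d^2)
  have h3 := Real.sqrt_nonneg (a^2+b^2)
  have h4 := Real.sqrt_nonneg (c^2+d^2)
  have key : a*c + b*d ≤ Real.sqrt (a^2+b^2) * Real.sqrt (c^2+d^2) := by
    have h5 : (a*c+b*d)^2 ≤ (a^2+b^2)*(c^2+d^2) := by nlinarith [sq_nonneg (a*d - b*c)]
    nlinarith [mul_nonneg h3 h4, abs_nonneg (a*c+b*d), sq_abs (a*c+b*d),
      le_abs_self (a*c+b*d)]
  rw [show Real.sqrt (a^2+b^2) + Real.sqrt (c^2+d^2)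
      = Real.sqrt ((Real.sqrt (a^2+b^2) + Real.sqrt (c^2+d^2))^2) by
      rw [Real.sqrt_sq (by positivity)]]
  exact Real.sqrt_le_sqrt (by nlinarith)

lemma pnorm_add_le {n : ℕ} (U V : E n × ℝ) : pnorm (U + V) ≤ pnorm U + pnorm V := by
  rw [pnorm, pnorm, pnorm]
  calc Real.sqrt (‖(U+V).1‖^2 + (U+V).2^2)
      ≤ Real.sqrt ((‖U.1‖ + ‖V.1‖)^2 + (|U.2| + |V.2|)^2) := by
        apply Real.sqrt_le_sqrt
        have h1 : ‖(U+V).1‖ ≤ ‖U.1‖ + ‖V.1‖ := norm_add_le _ _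
        have h2 : |(U+V).2| ≤ |U.2| + |V.2| := abs_add_le _ _
        have h3 : (U+V).2^2 ≤ (|U.2| + |V.2|)^2 := by
          rw [← sq_abs]; exact pow_le_pow_left₀ (abs_nonneg _) h2 2
        nlinarith [norm_nonneg (U+V).1, abs_nonneg (U+V).2]
    _ ≤ Real.sqrt (‖U.1‖^2 + |U.2|^2) + Real.sqrt (‖V.1‖^2 + |V.2|^2) :=
        sqrt2_add_le _ _ _ _
    _ = Real.sqrt (‖U.1‖^2 + U.2^2) + Real.sqrt (‖V.1‖^2 + V.2^2) := by rw [sq_abs, sq_abs]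

lemma pnorm_sub_le' {n : ℕ} (U V : E n × ℝ) : pnorm U ≤ pnorm V + pnorm (U - V) := by
  have := pnorm_add_le V (U - V)
  have e : V + (U - V) = U := by abel
  rwa [e] at this

lemma norm_sq_sub_norm_sq {n : ℕ} (a b : E n) :
    ‖a‖^2 - ‖b‖^2 = ⟪a - b, a + b⟫ := by
  rw [inner_sub_left, inner_add_right, inner_add_right, real_inner_self_eq_norm_sq,
    real_inner_self_eq_norm_sq, real_inner_comm b a]
  ring

set_option maxHeartbeats 2000000 in
/-- Lipschitz dependence of φ on the focus Y, with gain |x − x₀|. -/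
theorem stmt_7 {n : ℕ} (hn : 1 ≤ n) (κ : ℝ) (hκ : 1 < κ)
    (Ω : Set (E n)) (hΩo : IsOpen Ω) (hΩconv : Convex ℝ Ω)
    (hΩb : Bornology.IsBounded Ω) (hΩne : Ω.Nonempty)
    (Tgt : Set (E n × ℝ)) (hTc : IsCompact Tgt) (hTne : Tgt.Nonempty)
    (τ₀ τ₁ ω Δ : ℝ) (hτ₀ : 0 < τ₀) (hτ : τ₀ < τ₁) (hω : 0 < ω) (hΔpos : 0 < Δ)
    (hslab : ∀ Y ∈ Tgt, Y.2 ∈ Set.Icc τ₁ (τ₁ + ω))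
    (hΔ : ∀ Y ∈ Tgt, Metric.diam (Ω ∪ {Y.1}) ≤ Δ)
    (hcompat : max (κ * τ₀) (τ₀ + κ * Δ / (κ - 1)) ≤ τ₁)
    : ∃ C : ℝ, 0 < C ∧
      ∀ Y ∈ Tgt, ∀ Ybar ∈ Tgt, ∀ X₀ : E n × ℝ, X₀.1 ∈ Ω → X₀.2 ∈ Set.Icc 0 τ₀ →
        ∀ x ∈ Ω,
          |hyp κ x Y X₀ - hyp κ x Ybar X₀| ≤ C * ‖x - X₀.1‖ * pnorm (Y - Ybar) := by

  have hκ0 : (0:ℝ) < κ := by linarith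
  have hκ1 : (0:ℝ) < κ - 1 := by linarith
  have hk : (0:ℝ) < κ^2 - 1 := by nlinarith
  have hkne : (κ^2 - 1 : ℝ) ≠ 0 := ne_of_gt hk
  set m : ℝ := (κ - 1) * Δ with hm_def
  have hm : 0 < m := mul_pos hκ1 hΔpos
  set cM : ℝ := κ * (τ₁ + ω) with hcM_def
  have hcM : 0 < cM := mul_pos hκ0 (by linarith)
  set K : ℝ := 2*cM*(κ+1) + 2*Δ*(κ^2-1) with hK_def
  have hKpos : 0 < K := by
    have : 0 < 2*cM*(κ+1) := by positivity
    have h2 : 0 < 2*Δ*(κ^2-1) := by positivity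
    linarith
  refine ⟨1/m + Δ*K/(2*m^3), by positivity, ?_⟩
  intro Y hY Ybar hYb X₀ hX1 hX2 x hx
  set N : ℝ := pnorm (Y - Ybar) with hN_def
  have hN0 : 0 ≤ N := pnorm_nonneg' _
  have hτc : τ₀ + κ * Δ / (κ - 1) ≤ τ₁ := le_trans (le_max_right _ _) hcompat
  have hgap : κ * Δ ≤ (κ - 1) * (τ₁ - τ₀) := by
    have h' : κ * Δ / (κ - 1) ≤ τ₁ - τ₀ := by linarith
    rw [div_le_iff₀ hκ1] at h'
    nlinarith [h']
  -- distance bound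
  have hdist : ∀ x' ∈ Ω, ∀ Y' ∈ Tgt, ‖x' - Y'.1‖ ≤ Δ := by
    intro x' hx' Y' hY'
    have hb : Bornology.IsBounded (Ω ∪ {Y'.1}) :=
      hΩb.union Bornology.isBounded_singleton
    have h := Metric.dist_le_diam_of_mem hb (Set.mem_union_left _ hx')
      (Set.mem_union_right _ rfl)
    rw [dist_eq_norm] at h
    exact h.trans (hΔ Y' hY')
  -- bounds on cfun
  have hc_low : ∀ Y' ∈ Tgt, m ≤ cfun κ X₀ Y' := by
    intro Y' hY'
    have h1 : ‖X₀.1 - Y'.1‖ ≤ Δ := hdist X₀.1 hX1 Y' hY'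
    have hY2 := hslab Y' hY'
    have hp : pnorm (X₀ - Y') ≤ Δ + (Y'.2 - X₀.2) := by
      have := pnorm_le_add (X₀ - Y')
      have e1 : (X₀ - Y').1 = X₀.1 - Y'.1 := rfl
      have e2 : (X₀ - Y').2 = X₀.2 - Y'.2 := rfl
      rw [e1, e2] at this
      have habs : |X₀.2 - Y'.2| = Y'.2 - X₀.2 := by
        rw [abs_of_nonpos (by linarith [hY2.1, hX2.2])]; ring
      rw [habs] at this
      linarith
    have : cfun κ X₀ Y' = κ * (Y'.2 - X₀.2) - pnorm (X₀ - Y') := rfl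
    rw [this]
    have hh : τ₁ - τ₀ ≤ Y'.2 - X₀.2 := by linarith [hY2.1, hX2.2]
    nlinarith [hgap, hh, hκ1]
  have hc_hi : ∀ Y' ∈ Tgt, cfun κ X₀ Y' ≤ cM := by
    intro Y' hY'
    have hY2 := hslab Y' hY'
    have hp : 0 ≤ pnorm (X₀ - Y') := pnorm_nonneg' _
    have : cfun κ X₀ Y' = κ * (Y'.2 - X₀.2) - pnorm (X₀ - Y') := rfl
    rw [this, hcM_def]
    nlinarith [hY2.2, hX2.1]
  -- Lipschitz of cfun in Y
  have hclip : |cfun κ X₀ Y - cfun κ X₀ Ybar| ≤ (κ + 1) * N := by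
    have h1 : |Y.2 - Ybar.2| ≤ N := by
      have := snd_le_pnorm (Y - Ybar); exact this
    have h2 : pnorm (X₀ - Y) ≤ pnorm (X₀ - Ybar) + N := by
      have h := pnorm_sub_le' (X₀ - Y) (X₀ - Ybar)
      have e : (X₀ - Y) - (X₀ - Ybar) = -(Y - Ybar) := by abel
      rw [e, pnorm_neg'] at h
      exact h
    have h3 : pnorm (X₀ - Ybar) ≤ pnorm (X₀ - Y) + N := by
      have h := pnorm_sub_le' (X₀ - Ybar) (X₀ - Y)
      have e : (X₀ - Ybar) - (X₀ - Y) = Y - Ybar := by abel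
      rw [e] at h
      exact h
    have hkabs : |κ*(Y.2 - Ybar.2)| ≤ κ*N := by
      rw [abs_mul, abs_of_pos hκ0]
      exact mul_le_mul_of_nonneg_left h1 hκ0.le
    have hpabs : |pnorm (X₀ - Ybar) - pnorm (X₀ - Y)| ≤ N :=
      abs_le.mpr ⟨by linarith, by linarith⟩
    have e : cfun κ X₀ Y - cfun κ X₀ Ybar
        = κ*(Y.2 - Ybar.2) + (pnorm (X₀ - Ybar) - pnorm (X₀ - Y)) := by
      simp only [cfun]; ring
    rw [e]
    exact (abs_add_le _ _).trans (by linarith)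
  -- the function G
  set Gv : E n → (E n × ℝ) → ℝ :=
    fun x' Y' => Real.sqrt ((cfun κ X₀ Y')^2 + (κ^2-1)*‖x' - Y'.1‖^2) with hGv_def
  have hGarg : ∀ (x' : E n) (Y' : E n × ℝ),
      0 ≤ (cfun κ X₀ Y')^2 + (κ^2-1)*‖x' - Y'.1‖^2 := by
    intro x' Y'
    have := sq_nonneg (cfun κ X₀ Y')
    have h2 : 0 ≤ (κ^2-1)*‖x' - Y'.1‖^2 := mul_nonneg hk.le (sq_nonneg _)
    linarith
  have hGsq : ∀ (x' : E n) (Y' : E n × ℝ),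
      (Gv x' Y')^2 = (cfun κ X₀ Y')^2 + (κ^2-1)*‖x' - Y'.1‖^2 := by
    intro x' Y'; exact Real.sq_sqrt (hGarg x' Y')
  have hGlow : ∀ (x' : E n), ∀ Y' ∈ Tgt, m ≤ Gv x' Y' := by
    intro x' Y' hY'
    have hc := hc_low Y' hY'
    have h2 : 0 ≤ (κ^2-1)*‖x' - Y'.1‖^2 := mul_nonneg hk.le (sq_nonneg _)
    have : m = Real.sqrt (m^2) := (Real.sqrt_sq hm.le).symm
    rw [this]
    apply Real.sqrt_le_sqrt
    nlinarith [hc, hm.le]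
  -- rewriting hyp in terms of Gv
  have hhyp : ∀ (Y' : E n × ℝ) (x' : E n),
      hyp κ x' Y' X₀ = Y'.2 - κ * cfun κ X₀ Y' / (κ^2-1) - Gv x' Y' / (κ^2-1) := by
    intro Y' x'
    show hypb κ Y' (cfun κ X₀ Y') x' = _
    rw [hypb]
    congr 1
    rw [show (cfun κ X₀ Y')^2 / (κ^2-1)^2 + ‖x' - Y'.1‖^2 / (κ^2-1)
        = ((cfun κ X₀ Y')^2 + (κ^2-1)*‖x' - Y'.1‖^2) / (κ^2-1)^2 by
        field_simp]
    rw [Real.sqrt_div (hGarg x' Y'), Real.sqrt_sq hk.le]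
  -- value at the vertex
  have hval₀ : ∀ Y' ∈ Tgt, hyp κ X₀.1 Y' X₀ = X₀.2 := by
    intro Y' hY'
    have hY2 := hslab Y' hY'
    set d : ℝ := pnorm (X₀ - Y') with hd_def
    set h : ℝ := Y'.2 - X₀.2 with hh_def
    have hh : 0 < h := by rw [hh_def]; linarith [hY2.1, hX2.2]
    have hd0 : 0 ≤ d := pnorm_nonneg' _
    have hd2 : d^2 = ‖X₀.1 - Y'.1‖^2 + h^2 := by
      rw [hd_def, pnorm, Real.sq_sqrt (by positivity)]
      have e1 : (X₀ - Y').1 = X₀.1 - Y'.1 := rfl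
      have e2 : (X₀ - Y').2 = X₀.2 - Y'.2 := rfl
      rw [e1, e2, hh_def]; ring
    have hdh : h ≤ d := by
      have := snd_le_pnorm (X₀ - Y')
      have e2 : (X₀ - Y').2 = X₀.2 - Y'.2 := rfl
      rw [e2, abs_of_nonpos (by linarith [hY2.1, hX2.2] : X₀.2 - Y'.2 ≤ 0)] at this
      rw [hh_def]; linarith [this]
    have hcd : cfun κ X₀ Y' = κ * h - d := rfl
    have hG : Gv X₀.1 Y' = κ * d - h := by
      show Real.sqrt ((cfun κ X₀ Y')^2 + (κ^2-1)*‖X₀.1 - Y'.1‖^2) = κ * d - h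
      rw [hcd, show (κ*h - d)^2 + (κ^2-1)*‖X₀.1 - Y'.1‖^2 = (κ*d - h)^2 by
        linear_combination (1 - κ^2) * hd2]
      exact Real.sqrt_sq (by nlinarith [hdh, hd0])
    rw [hhyp Y' X₀.1, hG, hcd]
    rw [hh_def]
    field_simp
    ring
  -- Lipschitz of Gv in Y
  have hGlip : ∀ x' ∈ Ω, |Gv x' Y - Gv x' Ybar| ≤ K * N / (2*m) := by
    intro x' hx'
    set p : ℝ := (cfun κ X₀ Y)^2 + (κ^2-1)*‖x' - Y.1‖^2 with hp_def
    set q : ℝ := (cfun κ X₀ Ybar)^2 + (κ^2-1)*‖x' - Ybar.1‖^2 with hq_def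
    have hsum : 2*m ≤ Gv x' Y + Gv x' Ybar := by
      have := hGlow x' Y hY; have := hGlow x' Ybar hYb; linarith
    have hsumpos : 0 < Gv x' Y + Gv x' Ybar := by linarith
    have key : (Gv x' Y - Gv x' Ybar) * (Gv x' Y + Gv x' Ybar) = p - q := by
      have e1 := hGsq x' Y
      have e2 := hGsq x' Ybar
      rw [← hp_def] at e1; rw [← hq_def] at e2
      nlinarith [e1, e2]
    have hpq : |p - q| ≤ K * N := by
      have hny : ‖Y.1 - Ybar.1‖ ≤ N := fst_le_pnorm (Y - Ybar)
      have hc1 : |cfun κ X₀ Y - cfun κ X₀ Ybar| ≤ (κ+1)*N := hclip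
      have hcY := hc_low Y hY; have hcYb := hc_low Ybar hYb
      have hcY' := hc_hi Y hY; have hcYb' := hc_hi Ybar hYb
      have hn1 : ‖x' - Y.1‖ ≤ Δ := hdist x' hx' Y hY
      have hn2 : ‖x' - Ybar.1‖ ≤ Δ := hdist x' hx' Ybar hYb
      have hnd : |‖x' - Y.1‖ - ‖x' - Ybar.1‖| ≤ N := by
        have h := abs_norm_sub_norm_le (x' - Y.1) (x' - Ybar.1)
        have e : (x' - Y.1) - (x' - Ybar.1) = -(Y.1 - Ybar.1) := by abel
        rw [e, norm_neg] at h
        exact h.trans hny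
      have hA : |(cfun κ X₀ Y)^2 - (cfun κ X₀ Ybar)^2| ≤ (κ+1)*N * (2*cM) := by
        rw [show (cfun κ X₀ Y)^2 - (cfun κ X₀ Ybar)^2
            = (cfun κ X₀ Y - cfun κ X₀ Ybar) * (cfun κ X₀ Y + cfun κ X₀ Ybar) by ring,
          abs_mul]
        apply mul_le_mul hc1 _ (abs_nonneg _) (by positivity)
        rw [abs_of_nonneg (by linarith : (0:ℝ) ≤ cfun κ X₀ Y + cfun κ X₀ Ybar)]
        linarith
      have hB : |‖x' - Y.1‖^2 - ‖x' - Ybar.1‖^2| ≤ N * (2*Δ) := by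
        rw [show ‖x' - Y.1‖^2 - ‖x' - Ybar.1‖^2
            = (‖x' - Y.1‖ - ‖x' - Ybar.1‖) * (‖x' - Y.1‖ + ‖x' - Ybar.1‖) by ring,
          abs_mul]
        apply mul_le_mul hnd _ (abs_nonneg _) hN0
        rw [abs_of_nonneg (by positivity : (0:ℝ) ≤ ‖x' - Y.1‖ + ‖x' - Ybar.1‖)]
        linarith
      have hB' : (κ^2-1) * |‖x' - Y.1‖^2 - ‖x' - Ybar.1‖^2| ≤ (κ^2-1) * (N * (2*Δ)) :=
        mul_le_mul_of_nonneg_left hB hk.le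
      have htri : |p - q| ≤ |(cfun κ X₀ Y)^2 - (cfun κ X₀ Ybar)^2|
          + (κ^2-1) * |‖x' - Y.1‖^2 - ‖x' - Ybar.1‖^2| := by
        rw [hp_def, hq_def]
        have e : (cfun κ X₀ Y)^2 + (κ^2-1)*‖x' - Y.1‖^2
            - ((cfun κ X₀ Ybar)^2 + (κ^2-1)*‖x' - Ybar.1‖^2)
            = ((cfun κ X₀ Y)^2 - (cfun κ X₀ Ybar)^2)
              + (κ^2-1) * (‖x' - Y.1‖^2 - ‖x' - Ybar.1‖^2) := by ring
        rw [e]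
        refine (abs_add_le _ _).trans ?_
        rw [abs_mul, abs_of_pos hk]
      have := htri.trans (by linarith : |(cfun κ X₀ Y)^2 - (cfun κ X₀ Ybar)^2|
          + (κ^2-1) * |‖x' - Y.1‖^2 - ‖x' - Ybar.1‖^2| ≤ (κ+1)*N*(2*cM) + (κ^2-1)*(N*(2*Δ)))
      calc |p - q| ≤ (κ+1)*N*(2*cM) + (κ^2-1)*(N*(2*Δ)) := this
        _ = K * N := by rw [hK_def]; ring
    rw [le_div_iff₀ (by linarith : (0:ℝ) < 2*m)]
    calc |Gv x' Y - Gv x' Ybar| * (2*m)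
        ≤ |Gv x' Y - Gv x' Ybar| * (Gv x' Y + Gv x' Ybar) := by
          exact mul_le_mul_of_nonneg_left hsum (abs_nonneg _)
      _ = |p - q| := by
          rw [← abs_of_pos hsumpos, ← abs_mul, key]
      _ ≤ K * N := hpq
  -- the quantities in the final decomposition
  set v : E n := x - X₀.1 with hv_def
  set P : ℝ := ‖x - Y.1‖^2 - ‖X₀.1 - Y.1‖^2 with hP_def
  set Pb : ℝ := ‖x - Ybar.1‖^2 - ‖X₀.1 - Ybar.1‖^2 with hPb_def
  set S₁ : ℝ := Gv x Y + Gv X₀.1 Y with hS1_def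
  set S₂ : ℝ := Gv x Ybar + Gv X₀.1 Ybar with hS2_def
  have hS1 : 2*m ≤ S₁ := by
    have := hGlow x Y hY; have := hGlow X₀.1 Y hY; rw [hS1_def]; linarith
  have hS2 : 2*m ≤ S₂ := by
    have := hGlow x Ybar hYb; have := hGlow X₀.1 Ybar hYb; rw [hS2_def]; linarith
  have hS1pos : 0 < S₁ := by linarith
  have hS2pos : 0 < S₂ := by linarith
  have hPinner : P = ⟪v, (x - Y.1) + (X₀.1 - Y.1)⟫ := by
    rw [hP_def, norm_sq_sub_norm_sq]
    congr 1
    rw [hv_def]; abel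
  have hPbinner : Pb = ⟪v, (x - Ybar.1) + (X₀.1 - Ybar.1)⟫ := by
    rw [hPb_def, norm_sq_sub_norm_sq]
    congr 1
    rw [hv_def]; abel
  have hPb_bound : |Pb| ≤ 2*Δ*‖v‖ := by
    rw [hPbinner]
    calc |⟪v, (x - Ybar.1) + (X₀.1 - Ybar.1)⟫|
        ≤ ‖v‖ * ‖(x - Ybar.1) + (X₀.1 - Ybar.1)‖ := abs_real_inner_le_norm _ _
      _ ≤ ‖v‖ * (2*Δ) := by
          apply mul_le_mul_of_nonneg_left _ (norm_nonneg v)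
          calc ‖(x - Ybar.1) + (X₀.1 - Ybar.1)‖
              ≤ ‖x - Ybar.1‖ + ‖X₀.1 - Ybar.1‖ := norm_add_le _ _
            _ ≤ 2*Δ := by
                have := hdist x hx Ybar hYb
                have := hdist X₀.1 hX1 Ybar hYb
                linarith
      _ = 2*Δ*‖v‖ := by ring
  have hPdiff : |P - Pb| ≤ 2*‖v‖*N := by
    have he : P - Pb = ⟪v, ((x - Y.1) + (X₀.1 - Y.1)) - ((x - Ybar.1) + (X₀.1 - Ybar.1))⟫ := by
      rw [hPinner, hPbinner, inner_sub_right]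
    rw [he]
    have hw : ((x - Y.1) + (X₀.1 - Y.1)) - ((x - Ybar.1) + (X₀.1 - Ybar.1))
        = (Ybar.1 - Y.1) + (Ybar.1 - Y.1) := by abel
    rw [hw]
    calc |⟪v, (Ybar.1 - Y.1) + (Ybar.1 - Y.1)⟫|
        ≤ ‖v‖ * ‖(Ybar.1 - Y.1) + (Ybar.1 - Y.1)‖ := abs_real_inner_le_norm _ _
      _ ≤ ‖v‖ * (2*N) := by
          apply mul_le_mul_of_nonneg_left _ (norm_nonneg v)
          have h1 : ‖Ybar.1 - Y.1‖ ≤ N := by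
            have := fst_le_pnorm (Y - Ybar)
            have e : ‖Ybar.1 - Y.1‖ = ‖Y.1 - Ybar.1‖ := norm_sub_rev _ _
            rw [e]; exact this
          calc ‖(Ybar.1 - Y.1) + (Ybar.1 - Y.1)‖
              ≤ ‖Ybar.1 - Y.1‖ + ‖Ybar.1 - Y.1‖ := norm_add_le _ _
            _ ≤ 2*N := by linarith
      _ = 2*‖v‖*N := by ring
  have hSdiff : |S₂ - S₁| ≤ K*N/m := by
    have h1 := hGlip x hx
    have h2 := hGlip X₀.1 hX1
    have he : S₂ - S₁ = (Gv x Ybar - Gv x Y) + (Gv X₀.1 Ybar - Gv X₀.1 Y) := by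
      rw [hS1_def, hS2_def]; ring
    rw [he]
    calc |(Gv x Ybar - Gv x Y) + (Gv X₀.1 Ybar - Gv X₀.1 Y)|
        ≤ |Gv x Ybar - Gv x Y| + |Gv X₀.1 Ybar - Gv X₀.1 Y| := abs_add_le _ _
      _ ≤ K*N/(2*m) + K*N/(2*m) := by
          rw [abs_sub_comm (Gv x Ybar), abs_sub_comm (Gv X₀.1 Ybar)]
          exact add_le_add h1 h2
      _ = K*N/m := by field_simp; ring
  -- the main identity
  have hstep : ∀ Y' ∈ Tgt, hyp κ x Y' X₀ - X₀.2
      = -((‖x - Y'.1‖^2 - ‖X₀.1 - Y'.1‖^2) / (Gv x Y' + Gv X₀.1 Y')) := by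
    intro Y' hY'
    have hSpos : 0 < Gv x Y' + Gv X₀.1 Y' := by
      have := hGlow x Y' hY'; have := hGlow X₀.1 Y' hY'; linarith
    have hGdiff : Gv x Y' - Gv X₀.1 Y'
        = (κ^2-1) * (‖x - Y'.1‖^2 - ‖X₀.1 - Y'.1‖^2) / (Gv x Y' + Gv X₀.1 Y') := by
      rw [eq_div_iff (ne_of_gt hSpos)]
      have e1 := hGsq x Y'
      have e2 := hGsq X₀.1 Y'
      nlinarith [e1, e2]
    rw [← hval₀ Y' hY', hhyp Y' x, hhyp Y' X₀.1]
    have : Y'.2 - κ * cfun κ X₀ Y' / (κ^2-1) - Gv x Y' / (κ^2-1)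
        - (Y'.2 - κ * cfun κ X₀ Y' / (κ^2-1) - Gv X₀.1 Y' / (κ^2-1))
        = -((Gv x Y' - Gv X₀.1 Y') / (κ^2-1)) := by ring
    rw [this, hGdiff]
    field_simp
  have hmain : hyp κ x Y X₀ - hyp κ x Ybar X₀ = -(P / S₁) + Pb / S₂ := by
    have h1 := hstep Y hY
    have h2 := hstep Ybar hYb
    have : hyp κ x Y X₀ - hyp κ x Ybar X₀
        = (hyp κ x Y X₀ - X₀.2) - (hyp κ x Ybar X₀ - X₀.2) := by ring
    rw [this, h1, h2, hP_def, hPb_def, hS1_def, hS2_def]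
    ring
  -- final estimate
  have hsplit : -(P / S₁) + Pb / S₂
      = -((P - Pb)/S₁ + Pb*(S₂ - S₁)/(S₁*S₂)) := by
    field_simp
    ring
  rw [hmain, hsplit, abs_neg]
  calc |(P - Pb)/S₁ + Pb*(S₂ - S₁)/(S₁*S₂)|
      ≤ |P - Pb|/S₁ + |Pb*(S₂ - S₁)|/(S₁*S₂) := by
        refine (abs_add_le _ _).trans ?_
        rw [abs_div, abs_div, abs_of_pos hS1pos, abs_of_pos (mul_pos hS1pos hS2pos)]
    _ ≤ (2*‖v‖*N)/(2*m) + (2*Δ*‖v‖ * (K*N/m))/((2*m)*(2*m)) := by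
        refine add_le_add ?_ ?_
        · exact div_le_div₀ (by positivity) hPdiff (by linarith) hS1
        · refine div_le_div₀ (by positivity) ?_ (by positivity) ?_
          · rw [abs_mul]
            exact mul_le_mul hPb_bound hSdiff (abs_nonneg _) (by positivity)
          · exact mul_le_mul hS1 hS2 (by linarith) (by linarith [hS1pos])
    _ = (1/m + Δ*K/(2*m^3)) * ‖x - X₀.1‖ * N := by
        rw [hv_def]
        field_simp
end
end

section
/- Let n ≥ 1, λ ∈ (0,1), v̄, v̂ ∈ ℝⁿ, and v_λ = (1−λ)v̄ + λv̂. Let H̄, Ĥ, H_λ be positive real numbers satisfying the concavity inequality H_λ((1−λ)Ĥ + λH̄) ≤ H̄Ĥ (equivalently 1/H_λ ≥ (1−λ)/H̄ + λ/Ĥ). Define the vectors η̄ = (H̄v̄ − H_λv_λ, H_λ − H̄) ∈ ℝ^{n+1}, η̂ = (Ĥv̂ − H_λv_λ, H_λ − Ĥ) ∈ ℝ^{n+1}, and N_λ = (v_λ, −1) ∈ ℝ^{n+1}. Then every X ∈ ℝ^{n+1} with X·η̂ < 0 and X·η̄ < 0 satisfies X·N_λ ≤ 0. -/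
noncomputable section

open scoped RealInnerProductSpace

/-- Euclidean inner product on ℝ^{n+1} = ℝⁿ × ℝ. -/
def pdot {n : ℕ} (X W : E n × ℝ) : ℝ := ⟪X.1, W.1⟫ + X.2 * W.2

/-- the key linear-algebra step in the maximum principle (DASM). -/
theorem stmt_11 {n : ℕ} (hn : 1 ≤ n) (lam : ℝ) (hlam : lam ∈ Set.Ioo (0:ℝ) 1)
    (vb vh : E n) (Hb Hh Hl : ℝ) (hHb : 0 < Hb) (hHh : 0 < Hh) (hHl : 0 < Hl)
    (hconc : Hl * ((1 - lam) * Hh + lam * Hb) ≤ Hb * Hh)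
    (X : E n × ℝ)
    (h1 : pdot X (Hh • vh - Hl • ((1 - lam) • vb + lam • vh), Hl - Hh) < 0)
    (h2 : pdot X (Hb • vb - Hl • ((1 - lam) • vb + lam • vh), Hl - Hb) < 0) :
    pdot X ((1 - lam) • vb + lam • vh, (-1 : ℝ)) ≤ 0 := by
  obtain ⟨hl0, hl1⟩ := hlam
  have key : (1-lam)*Hh*(pdot X (Hb • vb - Hl • ((1 - lam) • vb + lam • vh), Hl - Hb))
      + lam*Hb*(pdot X (Hh • vh - Hl • ((1 - lam) • vb + lam • vh), Hl - Hh))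
      = (Hb*Hh - Hl*((1-lam)*Hh+lam*Hb)) * pdot X ((1 - lam) • vb + lam • vh, (-1:ℝ)) := by
    simp [pdot, inner_sub_right, inner_add_right, inner_smul_right]
    ring
  set c := Hb*Hh - Hl*((1-lam)*Hh+lam*Hb) with hc
  have hc0 : 0 ≤ c := by linarith
  have hlhs : (1-lam)*Hh*(pdot X (Hb • vb - Hl • ((1 - lam) • vb + lam • vh), Hl - Hb))
      + lam*Hb*(pdot X (Hh • vh - Hl • ((1 - lam) • vb + lam • vh), Hl - Hh)) < 0 := by
    have a1 := mul_neg_of_pos_of_neg (mul_pos (by linarith : (0:ℝ) < 1 - lam) hHh) h2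
    have a2 := mul_neg_of_pos_of_neg (mul_pos hl0 hHb) h1
    linarith
  rw [key] at hlhs
  rcases hc0.lt_or_eq with h | h
  · nlinarith
  · rw [← h, zero_mul] at hlhs; linarith
end
end

section
/- If u is a parallel refractor under the structural setup, then there exists a structural constant C > 0 (depending only on the bound 2/((κ−1)Δ) for the Hessian D²_xφ, hence only on κ and Δ) such that u((1−s)x̄ + sx̂) ≤ (1−s)u(x̄) + s·u(x̂) + C·s(1−s)|x̄ − x̂|² for all x̄, x̂ ∈ Ω and all s ∈ [0,1]. -/
noncomputable section

open scoped RealInnerProductSpace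

lemma parallelogram_combo {n : ℕ} (p q : E n) (s : ℝ) :
    (1-s)*‖p‖^2 + s*‖q‖^2 - ‖(1-s)•p + s•q‖^2 = s*(1-s)*‖p - q‖^2 := by
  have h1 := norm_add_sq_real ((1-s)•p) (s•q)
  have h2 := norm_sub_sq_real p q
  have h3 : ‖(1-s)•p‖^2 = (1-s)^2 * ‖p‖^2 := by
    rw [norm_smul, Real.norm_eq_abs, mul_pow, sq_abs]
  have h4 : ‖s•q‖^2 = s^2 * ‖q‖^2 := by
    rw [norm_smul, Real.norm_eq_abs, mul_pow, sq_abs]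
  have h5 : ⟪(1-s)•p, s•q⟫ = (1-s)*s*⟪p,q⟫ := by
    rw [real_inner_smul_left, real_inner_smul_right]; ring
  rw [h3, h4, h5] at h1
  linear_combination -h1 - s*(1-s)*h2

set_option maxHeartbeats 1000000 in
lemma sqrt_defect {n : ℕ} (c M : ℝ) (hc : 0 < c) (hM : 0 < M)
    (w a b : E n) (s : ℝ) (hs0 : 0 ≤ s) (hs1 : s ≤ 1) :
    (1-s) * Real.sqrt (c + ‖a - w‖^2 / M) + s * Real.sqrt (c + ‖b - w‖^2 / M)
      ≤ Real.sqrt (c + ‖((1-s)•a + s•b : E n) - w‖^2 / M)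
        + s * (1-s) * ‖a - b‖^2 / (M * (2 * Real.sqrt c)) := by
  set p := a - w with hp
  set q := b - w with hq
  have hm : ((1-s)•a + s•b : E n) - w = (1-s)•p + s•q := by
    rw [hp, hq]; module
  rw [hm]
  clear_value p q
  have hpq : p - q = a - b := by rw [hp, hq]; abel
  set Fa := Real.sqrt (c + ‖p‖^2 / M) with hFa
  set Fb := Real.sqrt (c + ‖q‖^2 / M) with hFb
  set Fm := Real.sqrt (c + ‖(1-s)•p + s•q‖^2 / M) with hFm
  have hcs : 0 < Real.sqrt c := Real.sqrt_pos.2 hc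
  have hFa0 : Real.sqrt c ≤ Fa := Real.sqrt_le_sqrt (le_add_of_nonneg_right (by positivity))
  have hFb0 : Real.sqrt c ≤ Fb := Real.sqrt_le_sqrt (le_add_of_nonneg_right (by positivity))
  have hFm0 : Real.sqrt c ≤ Fm := Real.sqrt_le_sqrt (le_add_of_nonneg_right (by positivity))
  have hFa2 : Fa^2 = c + ‖p‖^2 / M := Real.sq_sqrt (by positivity)
  have hFb2 : Fb^2 = c + ‖q‖^2 / M := Real.sq_sqrt (by positivity)
  have hFm2 : Fm^2 = c + ‖(1-s)•p + s•q‖^2 / M := Real.sq_sqrt (by positivity)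
  clear_value Fa Fb Fm
  have hid := parallelogram_combo p q s
  -- combo squared bound
  have hcombo2 : ((1-s)*Fa + s*Fb)^2 ≤ Fm^2 + s*(1-s)*‖p-q‖^2 / M := by
    have h1 : ((1-s)*Fa + s*Fb)^2 ≤ (1-s)*Fa^2 + s*Fb^2 := by
      nlinarith [sq_nonneg (Fa - Fb), mul_nonneg hs0 (sub_nonneg.2 hs1)]
    have h2 : (1-s)*Fa^2 + s*Fb^2 = Fm^2 + s*(1-s)*‖p-q‖^2 / M := by
      rw [hFa2, hFb2, hFm2]
      field_simp
      linear_combination hid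
    linarith
  have hQ0 : 0 ≤ s*(1-s)*‖p-q‖^2 / M := by
    have : 0 ≤ s*(1-s) := mul_nonneg hs0 (by linarith)
    positivity
  set Q := s*(1-s)*‖p-q‖^2 / M with hQ
  clear_value Q
  -- (Fm + Q/(2√c))^2 ≥ Fm^2 + Q
  have hR : Fm^2 + Q ≤ (Fm + Q / (2*Real.sqrt c))^2 := by
    have h1 : Q ≤ 2 * Fm * (Q / (2*Real.sqrt c)) := by
      have e : 2 * Fm * (Q / (2*Real.sqrt c)) = Fm * Q / Real.sqrt c := by
        field_simp
      rw [e, le_div_iff₀ hcs]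
      calc Q * Real.sqrt c ≤ Q * Fm := mul_le_mul_of_nonneg_left hFm0 hQ0
        _ = Fm * Q := mul_comm _ _
    nlinarith [sq_nonneg (Q / (2*Real.sqrt c))]
  have hcombo0 : 0 ≤ (1-s)*Fa + s*Fb := by
    have : 0 ≤ Fa := le_trans hcs.le hFa0
    have : 0 ≤ Fb := le_trans hcs.le hFb0
    nlinarith
  have hfin : (1-s)*Fa + s*Fb ≤ Fm + Q / (2*Real.sqrt c) := by
    have hRnn : 0 ≤ Fm + Q / (2*Real.sqrt c) :=
      add_nonneg (le_trans hcs.le hFm0) (div_nonneg hQ0 (by positivity))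
    nlinarith [hcombo2, hR]
  have : Q / (2*Real.sqrt c) = s*(1-s)*‖p-q‖^2 / (M * (2*Real.sqrt c)) := by
    rw [hQ]; field_simp
  rw [this, hpq] at hfin
  linarith

/-- Sqrt bound used to get the structural lower bound on `b`. -/
lemma sqrt_ub (κ b d : ℝ) (hκ : 1 < κ) (hb : 0 < b) (hd : 0 ≤ d) :
    Real.sqrt (b^2/(κ^2-1)^2 + d^2/(κ^2-1)) ≤ b/(κ^2-1) + d/(κ-1) := by
  have hM : (0:ℝ) < κ^2 - 1 := by nlinarith
  have hκ1 : (0:ℝ) < κ - 1 := by linarith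
  rw [show b/(κ^2-1) + d/(κ-1) = Real.sqrt ((b/(κ^2-1) + d/(κ-1))^2) from
    (Real.sqrt_sq (by positivity)).symm]
  apply Real.sqrt_le_sqrt
  have h1 : d^2/(κ^2-1) ≤ d^2/(κ-1)^2 := by
    apply div_le_div_of_nonneg_left (sq_nonneg d) (by positivity)
    nlinarith
  have h2 : 0 ≤ 2*(b/(κ^2-1))*(d/(κ-1)) := by positivity
  have e : (b/(κ^2-1) + d/(κ-1))^2
      = b^2/(κ^2-1)^2 + 2*(b/(κ^2-1))*(d/(κ-1)) + d^2/(κ-1)^2 := by field_simp; ring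
  rw [e]; linarith

/-- semiconvexity of parallel refractors: a quadratic convexity
defect estimate with a structural constant. -/
theorem stmt_14 {n : ℕ} (hn : 1 ≤ n) (κ : ℝ) (hκ : 1 < κ)
    (Ω : Set (E n)) (hΩo : IsOpen Ω) (hΩconv : Convex ℝ Ω)
    (hΩb : Bornology.IsBounded Ω) (hΩne : Ω.Nonempty)
    (Tgt : Set (E n × ℝ)) (hTc : IsCompact Tgt) (hTne : Tgt.Nonempty)
    (τ₀ τ₁ ω Δ : ℝ) (hτ₀ : 0 < τ₀) (hτ : τ₀ < τ₁) (hω : 0 < ω) (hΔpos : 0 < Δ)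
    (hslab : ∀ Y ∈ Tgt, Y.2 ∈ Set.Icc τ₁ (τ₁ + ω))
    (hΔ : ∀ Y ∈ Tgt, Metric.diam (Ω ∪ {Y.1}) ≤ Δ)
    (hcompat : max (κ * τ₀) (τ₀ + κ * Δ / (κ - 1)) ≤ τ₁)
    (u : E n → ℝ) (hurange : ∀ x ∈ Ω, u x ∈ Set.Icc 0 τ₀)
    (hu : ∀ x₀ ∈ Ω, ∃ Y ∈ Tgt, ∃ b : ℝ, 0 < b ∧
      b < κ * Y.2 - Real.sqrt (Y.2 ^ 2 + Δ ^ 2) ∧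
      (∀ x ∈ Ω, hypb κ Y b x ≤ u x) ∧ u x₀ = hypb κ Y b x₀)
    : ∃ C : ℝ, 0 < C ∧
      ∀ xb ∈ Ω, ∀ xh ∈ Ω, ∀ s ∈ Set.Icc (0:ℝ) 1,
        u ((1 - s) • xb + s • xh)
          ≤ (1 - s) * u xb + s * u xh + C * s * (1 - s) * ‖xb - xh‖ ^ 2 := by
  have hκ1 : (0:ℝ) < κ - 1 := by linarith
  have hM : (0:ℝ) < κ^2 - 1 := by nlinarith
  refine ⟨1/((κ-1)*Δ), by positivity, ?_⟩
  rintro xb hxb xh hxh s ⟨hs0, hs1⟩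
  have hmΩ : (1-s)•xb + s•xh ∈ Ω := hΩconv hxb hxh (by linarith) hs0 (by ring)
  obtain ⟨Y, hY, b, hb0, -, hsupp, heq⟩ := hu _ hmΩ
  set m : E n := (1-s)•xb + s•xh with hmdef
  -- distance bound
  have hd : ‖m - Y.1‖ ≤ Δ := by
    rw [← dist_eq_norm]
    exact le_trans (Metric.dist_le_diam_of_mem (hΩb.union Bornology.isBounded_singleton)
      (Set.mem_union_left _ hmΩ) (Set.mem_union_right _ rfl)) (hΔ Y hY)
  have hd0 : 0 ≤ ‖m - Y.1‖ := norm_nonneg _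
  -- lower bound on b
  have hub : u m ≤ τ₀ := (hurange m hmΩ).2
  have hY2 : τ₁ ≤ Y.2 := (hslab Y hY).1
  have hc2 : τ₀ + κ*Δ/(κ-1) ≤ τ₁ := le_trans (le_max_right _ _) hcompat
  have hbge : (κ-1)*Δ ≤ b := by
    have hsq := sqrt_ub κ b ‖m - Y.1‖ hκ hb0 hd0
    rw [hypb] at heq
    have hdd : ‖m - Y.1‖/(κ-1) ≤ Δ/(κ-1) := by gcongr
    have hsum : κ*b/(κ^2-1) + b/(κ^2-1) = b/(κ-1) := by field_simp; ring
    have hDd : κ*Δ/(κ-1) - Δ/(κ-1) = Δ := by field_simp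
    have hfin : Δ ≤ b/(κ-1) := by linarith
    rw [le_div_iff₀ hκ1] at hfin
    linarith
  -- semiconcavity estimate for the supporting hyperboloid
  have key := sqrt_defect (b^2/(κ^2-1)^2) (κ^2-1) (by positivity) hM Y.1 xb xh s hs0 hs1
  have hsc : Real.sqrt (b^2/(κ^2-1)^2) = b/(κ^2-1) := by
    rw [show b^2/(κ^2-1)^2 = (b/(κ^2-1))^2 from (div_pow b (κ^2-1) 2).symm, Real.sqrt_sq (by positivity)]
  rw [hsc] at key
  have hden : (κ^2-1) * (2 * (b/(κ^2-1))) = 2*b := by field_simp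
  rw [hden] at key
  have h1 : hypb κ Y b xb ≤ u xb := hsupp xb hxb
  have h2 : hypb κ Y b xh ≤ u xh := hsupp xh hxh
  rw [hypb] at h1 h2 heq
  set Fa := Real.sqrt (b^2/(κ^2-1)^2 + ‖xb - Y.1‖^2/(κ^2-1)) with hFa
  set Fb := Real.sqrt (b^2/(κ^2-1)^2 + ‖xh - Y.1‖^2/(κ^2-1)) with hFb
  set Fm := Real.sqrt (b^2/(κ^2-1)^2 + ‖m - Y.1‖^2/(κ^2-1)) with hFm
  -- the defect term comparison
  have hT : (0:ℝ) ≤ s*(1-s)*‖xb - xh‖^2 := by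
    have : 0 ≤ s*(1-s) := mul_nonneg hs0 (by linarith)
    positivity
  have hQle : s*(1-s)*‖xb - xh‖^2/(2*b) ≤ 1/((κ-1)*Δ)*(s*(1-s)*‖xb - xh‖^2) := by
    rw [one_div, inv_mul_eq_div]
    apply div_le_div_of_nonneg_left hT (by positivity)
    nlinarith
  have e1 : (1-s)*(Y.2 - κ*b/(κ^2-1) - Fa) ≤ (1-s)*u xb :=
    mul_le_mul_of_nonneg_left h1 (by linarith)
  have e2 : s*(Y.2 - κ*b/(κ^2-1) - Fb) ≤ s*u xh :=
    mul_le_mul_of_nonneg_left h2 hs0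
  calc u m = Y.2 - κ*b/(κ^2-1) - Fm := heq
    _ ≤ Y.2 - κ*b/(κ^2-1) - ((1-s)*Fa + s*Fb) + s*(1-s)*‖xb - xh‖^2/(2*b) := by
        linarith [key]
    _ = (1-s)*(Y.2 - κ*b/(κ^2-1) - Fa) + s*(Y.2 - κ*b/(κ^2-1) - Fb)
          + s*(1-s)*‖xb - xh‖^2/(2*b) := by ring
    _ ≤ (1-s)*u xb + s*u xh + 1/((κ-1)*Δ)*(s*(1-s)*‖xb - xh‖^2) := by
        linarith [e1, e2, hQle]
    _ = (1-s)*u xb + s*u xh + 1/((κ-1)*Δ)*s*(1-s)*‖xb - xh‖^2 := by ring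
end
end

section
/- Suppose u is a parallel refractor under the structural setup and the target Σ is regular from X* = (x*, u(x*)). Then there exist positive constants δ, C₁, C₂ depending on X* such that: if x̄, x̂ ∈ B_δ(x*), Ȳ ∈ F_u(x̄), Ŷ ∈ F_u(x̂), and |Ȳ − Ŷ| ≥ |x̄ − x̂|, then there exists x₀ on the segment [x̄, x̂] such that, with X₀* = (x₀, u(x₀)), u(x) − φ(x, Y, X₀*) ≥ −C|Ȳ − Ŷ||x̄ − x̂| − C|Y(λ) − Y||x − x₀| + C₁|Ȳ − Ŷ|²|x − x₀|² for all Y(λ) ∈ [Ȳ, Ŷ]_{X₀*} with λ ∈ [1/4, 3/4], all Y ∈ Σ, and all x ∈ Ω ∩ B_{C₂}(x₀), where the constant C depends only on the derivative bounds of φ. -/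
noncomputable section

open scoped RealInnerProductSpace

/-- Q(v) = (κ − √(1 − (κ²−1)|v|²))/(1 + |v|²). -/
def Qf {n : ℕ} (κ : ℝ) (v : E n) : ℝ :=
  (κ - Real.sqrt (1 - (κ ^ 2 - 1) * ‖v‖ ^ 2)) / (1 + ‖v‖ ^ 2)

/-- Λ(v) = (Q(v)v, −Q(v) + κ), the refracted unit direction. -/
def Λf {n : ℕ} (κ : ℝ) (v : E n) : E n × ℝ := (Qf κ v • v, κ - Qf κ v)

/-- The point of the target in the direction Λ(v) from Z: Y(v) = Z + s_Z(Λ(v))Λ(v). -/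
def YofZ {n : ℕ} (κ : ℝ) (sfun : (E n × ℝ) → (E n × ℝ) → ℝ) (Z : E n × ℝ)
    (v : E n) : E n × ℝ :=
  Z + sfun Z (Λf κ v) • Λf κ v

/-- The point Y_Z(λ) on the "segment" [Ȳ, Ŷ]_Z obtained by interpolating the
gradients v̄ = D_xφ(z, Ȳ, Z), v̂ = D_xφ(z, Ŷ, Z). -/
def YZlam {n : ℕ} (κ : ℝ) (sfun : (E n × ℝ) → (E n × ℝ) → ℝ) (Z : E n × ℝ)
    (Yb Yh : E n × ℝ) (lam : ℝ) : E n × ℝ :=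
  YofZ κ sfun Z ((1 - lam) • gradient (fun z => hyp κ z Yb Z) Z.1
    + lam • gradient (fun z => hyp κ z Yh Z) Z.1)

/-- The refractor-normal map F_u(x̄) = {Y ∈ Σ : u ≥ φ(·, Y, (x̄, u(x̄))) on Ω}. -/
def Fu {n : ℕ} (κ : ℝ) (Ω : Set (E n)) (Tgt : Set (E n × ℝ)) (u : E n → ℝ)
    (xb : E n) : Set (E n × ℝ) :=
  {Y ∈ Tgt | ∀ x ∈ Ω, hyp κ x Y (xb, u xb) ≤ u x}


/-! ### Auxiliary lemmas -/

section Aux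

lemma le_sqrt_self_sq_add {p c : ℝ} (hp : 0 ≤ p) (hc : 0 ≤ c) : p ≤ Real.sqrt (p^2 + c) :=
  (Real.le_sqrt hp (by positivity)).mpr (by linarith)

lemma sqrt_le_sqrt_add {p q c : ℝ} (hq : 0 ≤ q) (hc : 0 ≤ c) :
    Real.sqrt (p^2 + c) ≤ Real.sqrt (q^2 + c) + |p - q| := by
  have h1 : q ≤ Real.sqrt (q^2 + c) := le_sqrt_self_sq_add hq hc
  have h0 : (0:ℝ) ≤ Real.sqrt (q^2+c) + |p-q| := by positivity
  have hq2 : Real.sqrt (q^2+c) ^ 2 = q^2 + c := Real.sq_sqrt (by positivity)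
  rw [show Real.sqrt (q^2+c) + |p-q| = Real.sqrt ((Real.sqrt (q^2+c) + |p-q|)^2) from
    (Real.sqrt_sq h0).symm]
  apply Real.sqrt_le_sqrt
  have habs : (p - q) ≤ |p - q| := le_abs_self _
  have habs2 : |p - q|^2 = (p-q)^2 := sq_abs _
  nlinarith [abs_nonneg (p-q), h1, hq]

lemma abs_sqrt_sub_sqrt {p q c : ℝ} (hp : 0 ≤ p) (hq : 0 ≤ q) (hc : 0 ≤ c) :
    |Real.sqrt (p^2 + c) - Real.sqrt (q^2 + c)| ≤ |p - q| := by
  rw [abs_sub_le_iff]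
  constructor
  · have := sqrt_le_sqrt_add (p := p) hq hc; linarith
  · have := sqrt_le_sqrt_add (p := q) hp hc; rw [abs_sub_comm] at this; linarith

lemma sqrt_sq_add_sq_le {p q : ℝ} (hp : 0 ≤ p) (hq : 0 ≤ q) : Real.sqrt (p^2 + q^2) ≤ p + q := by
  rw [show p + q = Real.sqrt ((p+q)^2) from (Real.sqrt_sq (by linarith)).symm]
  apply Real.sqrt_le_sqrt; nlinarith

lemma minkowski2 {p q p' q' : ℝ} (hp : 0 ≤ p) (hq : 0 ≤ q) (hp' : 0 ≤ p') (hq' : 0 ≤ q') :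
    Real.sqrt ((p+p')^2 + (q+q')^2) ≤ Real.sqrt (p^2+q^2) + Real.sqrt (p'^2+q'^2) := by
  have h1 : p*p' + q*q' ≤ Real.sqrt (p^2+q^2) * Real.sqrt (p'^2+q'^2) := by
    rw [← Real.sqrt_mul (by positivity)]
    apply (Real.le_sqrt (by positivity) (by positivity)).mpr
    nlinarith [sq_nonneg (p*q' - q*p')]
  have h0 : (0:ℝ) ≤ Real.sqrt (p^2+q^2) + Real.sqrt (p'^2+q'^2) := by positivity
  rw [show Real.sqrt (p^2+q^2) + Real.sqrt (p'^2+q'^2)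
      = Real.sqrt ((Real.sqrt (p^2+q^2) + Real.sqrt (p'^2+q'^2))^2) from (Real.sqrt_sq h0).symm]
  apply Real.sqrt_le_sqrt
  have e1 : Real.sqrt (p^2+q^2) ^ 2 = p^2+q^2 := Real.sq_sqrt (by positivity)
  have e2 : Real.sqrt (p'^2+q'^2) ^ 2 = p'^2+q'^2 := Real.sq_sqrt (by positivity)
  nlinarith

namespace pn
variable {n : ℕ}
lemma nonneg (W : E n × ℝ) : 0 ≤ pnorm W := Real.sqrt_nonneg _
lemma fst_le (W : E n × ℝ) : ‖W.1‖ ≤ pnorm W := by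
  rw [show ‖W.1‖ = Real.sqrt (‖W.1‖^2) from (Real.sqrt_sq (norm_nonneg _)).symm]
  exact Real.sqrt_le_sqrt (by nlinarith [sq_nonneg W.2])
lemma snd_le (W : E n × ℝ) : |W.2| ≤ pnorm W := by
  rw [show |W.2| = Real.sqrt (W.2^2) from (Real.sqrt_sq_eq_abs _).symm]
  exact Real.sqrt_le_sqrt (by nlinarith [sq_nonneg ‖W.1‖])
lemma le_add (W : E n × ℝ) : pnorm W ≤ ‖W.1‖ + |W.2| := by
  have := sqrt_sq_add_sq_le (norm_nonneg W.1) (abs_nonneg W.2)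
  rw [sq_abs] at this; exact this
lemma add_le (U V : E n × ℝ) : pnorm (U + V) ≤ pnorm U + pnorm V := by
  unfold pnorm
  calc Real.sqrt (‖(U+V).1‖^2 + (U+V).2^2)
      ≤ Real.sqrt ((‖U.1‖+‖V.1‖)^2 + (|U.2|+|V.2|)^2) := by
        apply Real.sqrt_le_sqrt
        have h1 : ‖(U+V).1‖ ≤ ‖U.1‖ + ‖V.1‖ := norm_add_le _ _
        have h2 : |(U+V).2| ≤ |U.2| + |V.2| := abs_add_le _ _
        have h2' : (U+V).2^2 ≤ (|U.2|+|V.2|)^2 := by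
          nlinarith [abs_nonneg (U+V).2, sq_abs (U+V).2, neg_abs_le (U+V).2, le_abs_self (U+V).2]
        nlinarith [norm_nonneg (U+V).1, norm_nonneg U.1, norm_nonneg V.1]
    _ ≤ Real.sqrt (‖U.1‖^2 + |U.2|^2) + Real.sqrt (‖V.1‖^2 + |V.2|^2) :=
        minkowski2 (norm_nonneg _) (abs_nonneg _) (norm_nonneg _) (abs_nonneg _)
    _ = pnorm U + pnorm V := by rw [sq_abs, sq_abs]; rfl
lemma neg (U : E n × ℝ) : pnorm (-U) = pnorm U := by
  unfold pnorm; simp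
lemma sub_le (U V : E n × ℝ) : pnorm (U - V) ≤ pnorm U + pnorm V := by
  have := add_le U (-V); rw [neg V] at this; simpa [sub_eq_add_neg] using this
lemma rev_tri (P Q : E n × ℝ) : pnorm P - pnorm Q ≤ pnorm (P - Q) := by
  have := add_le (P - Q) Q; simp at this; linarith
lemma abs_sub (P Q : E n × ℝ) : |pnorm P - pnorm Q| ≤ pnorm (P - Q) := by
  rw [abs_sub_le_iff]
  refine ⟨rev_tri P Q, ?_⟩
  have := rev_tri Q P
  have h2 : pnorm (Q - P) = pnorm (P - Q) := by
    rw [show Q - P = -(P - Q) from (neg_sub P Q).symm, neg]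
  linarith
end pn

/-- L1: the hyperboloid with focus Y and constant c(X₀, Y) passes through X₀. -/
lemma hyp_base {n : ℕ} {κ : ℝ} (hκ : 1 < κ) (x₀ : E n) (z : ℝ) (Y : E n × ℝ) :
    hyp κ x₀ Y (x₀, z) = z := by
  have hA : (0:ℝ) < κ^2 - 1 := by nlinarith
  set ρ := ‖x₀ - Y.1‖ with hρ
  set t := Y.2 - z with ht
  have hρ0 : 0 ≤ ρ := norm_nonneg _
  have hc : pnorm ((x₀, z) - Y) = Real.sqrt (ρ^2 + t^2) := by
    unfold pnorm
    have h1 : ((x₀, z) - Y).1 = x₀ - Y.1 := rfl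
    have h2 : ((x₀, z) - Y).2 = z - Y.2 := rfl
    rw [h1, h2, show (z - Y.2)^2 = t^2 by rw [ht]; ring]
  set R := Real.sqrt (ρ^2 + t^2) with hR
  have hR0 : 0 ≤ R := Real.sqrt_nonneg _
  have hRsq : R^2 = ρ^2 + t^2 := Real.sq_sqrt (by positivity)
  have htR : t ≤ R := by
    calc t ≤ |t| := le_abs_self t
    _ = Real.sqrt (t^2) := (Real.sqrt_sq_eq_abs t).symm
    _ ≤ R := Real.sqrt_le_sqrt (by nlinarith)
  have hb : cfun κ ((x₀, z)) Y = κ * t - R := by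
    unfold cfun; rw [hc]
  have hκRt : 0 ≤ κ * R - t := by nlinarith
  have hkey : Real.sqrt ((κ*t - R)^2/(κ^2-1)^2 + ρ^2/(κ^2-1)) = (κ*R - t)/(κ^2-1) := by
    have harg : (κ*t - R)^2/(κ^2-1)^2 + ρ^2/(κ^2-1) = ((κ*R - t)/(κ^2-1))^2 := by
      have hne : κ^2 - 1 ≠ 0 := hA.ne'
      rw [div_add_div _ _ (pow_ne_zero 2 hne) hne, div_pow,
        div_eq_div_iff (mul_ne_zero (pow_ne_zero 2 hne) hne) (pow_ne_zero 2 hne)]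
      linear_combination (-(κ^2-1)^4) * hRsq
    rw [harg, Real.sqrt_sq (by positivity)]
  unfold hyp hypb
  rw [hb, hkey]
  field_simp
  ring

/-- L2: Lipschitz continuity of the hyperboloids in x. -/
lemma hypb_lip_x {n : ℕ} {κ : ℝ} (hκ : 1 < κ) (Y : E n × ℝ) (b : ℝ) (x x' : E n) :
    |hypb κ Y b x - hypb κ Y b x'| ≤ ‖x - x'‖ / Real.sqrt (κ^2 - 1) := by
  have hA : (0:ℝ) < κ^2 - 1 := by nlinarith
  set A := κ^2 - 1
  have hsA : 0 < Real.sqrt A := Real.sqrt_pos.mpr hA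
  have hsA2 : Real.sqrt A ^ 2 = A := Real.sq_sqrt hA.le
  have hrw : ∀ z : E n, b^2/A^2 + ‖z - Y.1‖^2/A = (‖z - Y.1‖/Real.sqrt A)^2 + b^2/A^2 := by
    intro z; rw [div_pow, hsA2]; ring
  have h1 : hypb κ Y b x - hypb κ Y b x'
      = Real.sqrt ((‖x' - Y.1‖/Real.sqrt A)^2 + b^2/A^2)
        - Real.sqrt ((‖x - Y.1‖/Real.sqrt A)^2 + b^2/A^2) := by
    unfold hypb; rw [← hrw, ← hrw]; ring
  rw [h1]
  have h2 := abs_sqrt_sub_sqrt (p := ‖x' - Y.1‖/Real.sqrt A) (q := ‖x - Y.1‖/Real.sqrt A)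
    (c := b^2/A^2) (by positivity) (by positivity) (by positivity)
  have h3 : |‖x' - Y.1‖/Real.sqrt A - ‖x - Y.1‖/Real.sqrt A| ≤ ‖x - x'‖ / Real.sqrt A := by
    rw [div_sub_div_same, abs_div, abs_of_pos hsA]
    gcongr
    calc |‖x' - Y.1‖ - ‖x - Y.1‖| ≤ ‖(x' - Y.1) - (x - Y.1)‖ := abs_norm_sub_norm_le _ _
    _ = ‖x - x'‖ := by rw [show (x' - Y.1) - (x - Y.1) = -(x - x') by abel, norm_neg]
  exact h2.trans h3

/-- L4: the constant b is recovered Lipschitzly from the value of the hyperboloid. -/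
lemma b_recover {n : ℕ} {κ : ℝ} (hκ : 1 < κ) (Y : E n × ℝ) {b b' : ℝ}
    (hb : 0 ≤ b) (hb' : 0 ≤ b') (x : E n) :
    |b - b'| ≤ (κ + 1) * |hypb κ Y b x - hypb κ Y b' x| := by
  have hA : (0:ℝ) < κ^2 - 1 := by nlinarith
  set A := κ^2 - 1 with hAdef
  set c : ℝ := ‖x - Y.1‖^2 / A with hcdef
  have hc : 0 ≤ c := by positivity
  have hrw : ∀ t : ℝ, t^2/A^2 + ‖x - Y.1‖^2/A = (t/A)^2 + c := by
    intro t; rw [hcdef, div_pow]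
  have hS := abs_sqrt_sub_sqrt (p := b/A) (q := b'/A) (c := c)
    (by positivity) (by positivity) hc
  have hSd : |b/A - b'/A| = |b - b'|/A := by
    rw [div_sub_div_same, abs_div, abs_of_pos hA]
  have hdiff : hypb κ Y b x - hypb κ Y b' x
      = -(κ*(b - b')/A) - (Real.sqrt ((b/A)^2 + c) - Real.sqrt ((b'/A)^2 + c)) := by
    unfold hypb; rw [← hrw, ← hrw]; ring
  have h1 : κ*|b-b'|/A - |b-b'|/A ≤ |hypb κ Y b x - hypb κ Y b' x| := by
    rw [hdiff]
    have t1 : |κ*(b-b')/A| = κ*|b-b'|/A := by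
      rw [abs_div, abs_of_pos hA, abs_mul, abs_of_pos (by linarith : (0:ℝ) < κ)]
    rw [hSd] at hS
    set S1 := Real.sqrt ((b/A)^2 + c)
    set S2 := Real.sqrt ((b'/A)^2 + c)
    have t3 := abs_sub_abs_le_abs_sub (κ*(b-b')/A) (-(S1 - S2))
    rw [abs_neg] at t3
    have e : |κ*(b-b')/A - -(S1 - S2)| = |-(κ*(b-b')/A) - (S1 - S2)| := by
      rw [show -(κ*(b-b')/A) - (S1 - S2) = -(κ*(b-b')/A - -(S1 - S2)) by ring, abs_neg]
    rw [← e, ← t1]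
    linarith
  have h2 : κ*|b-b'|/A - |b-b'|/A = |b-b'|/(κ+1) := by
    rw [div_sub_div_same, div_eq_div_iff hA.ne' (ne_of_gt (by linarith)), hAdef]; ring
  rw [h2] at h1
  have hκ1 : (0:ℝ) < κ + 1 := by linarith
  calc |b - b'| = (κ+1) * (|b-b'|/(κ+1)) := by field_simp
    _ ≤ (κ+1) * |hypb κ Y b x - hypb κ Y b' x| := by
        apply mul_le_mul_of_nonneg_left h1 (by linarith)

set_option maxHeartbeats 1000000 in
/-- L5: mixed second-difference estimate for differences of hyperboloids. -/
lemma key_lip {n : ℕ} {κ : ℝ} (hκ : 1 < κ) {b₀ b b' : ℝ} (hb₀ : 0 < b₀)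
    (hb : b₀ ≤ b) (hb' : b₀ ≤ b') (Y Y' : E n × ℝ) (x x₀ : E n) :
    |(hypb κ Y b x - hypb κ Y' b' x) - (hypb κ Y b x₀ - hypb κ Y' b' x₀)|
      ≤ ((|b - b'| / Real.sqrt (κ^2 - 1) + 2 * ‖Y.1 - Y'.1‖) / b₀) * ‖x - x₀‖ := by
  have hA : (0:ℝ) < κ^2 - 1 := by nlinarith
  set A := κ^2 - 1 with hAdef
  set sA := Real.sqrt A with hsAdef
  have hsA : 0 < sA := Real.sqrt_pos.mpr hA
  have hsA2 : sA^2 = A := Real.sq_sqrt hA.le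
  set y := Y.1
  set y' := Y'.1
  set S : E n → ℝ := fun z => Real.sqrt ((b/A)^2 + ‖z - y‖^2/A) with hSdef
  set S' : E n → ℝ := fun z => Real.sqrt ((b'/A)^2 + ‖z - y'‖^2/A) with hS'def
  have hbpos : 0 < b := lt_of_lt_of_le hb₀ hb
  have hb'pos : 0 < b' := lt_of_lt_of_le hb₀ hb'
  have hSlb : ∀ z, b₀/A ≤ S z := by
    intro z
    calc b₀/A ≤ b/A := by gcongr
      _ ≤ S z := le_sqrt_self_sq_add (by positivity) (by positivity)
  have hS'lb : ∀ z, b₀/A ≤ S' z := by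
    intro z
    calc b₀/A ≤ b'/A := by gcongr
      _ ≤ S' z := le_sqrt_self_sq_add (by positivity) (by positivity)
  have hb₀A : 0 < b₀/A := by positivity
  have hSpos : ∀ z, 0 < S z := fun z => lt_of_lt_of_le hb₀A (hSlb z)
  have hS'pos : ∀ z, 0 < S' z := fun z => lt_of_lt_of_le hb₀A (hS'lb z)
  have hhyp1 : ∀ z : E n, hypb κ Y b z = Y.2 - κ*b/A - S z := by
    intro z; unfold hypb; rw [hSdef]; simp only; rw [← div_pow]
  have hhyp2 : ∀ z : E n, hypb κ Y' b' z = Y'.2 - κ*b'/A - S' z := by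
    intro z; unfold hypb; rw [hS'def]; simp only; rw [← div_pow]
  have hred : (hypb κ Y b x - hypb κ Y' b' x) - (hypb κ Y b x₀ - hypb κ Y' b' x₀)
      = -((S x - S' x) - (S x₀ - S' x₀)) := by
    rw [hhyp1, hhyp1, hhyp2, hhyp2]; ring
  rw [hred, abs_neg]
  have hSsq : ∀ z, S z^2 = (b/A)^2 + ‖z - y‖^2/A := fun z => Real.sq_sqrt (by positivity)
  have hS'sq : ∀ z, S' z^2 = (b'/A)^2 + ‖z - y'‖^2/A := fun z => Real.sq_sqrt (by positivity)
  set N : E n → ℝ := fun z => (b/A)^2 - (b'/A)^2 + (‖z - y‖^2 - ‖z - y'‖^2)/A with hNdef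
  have hNz : ∀ z, (S z - S' z) * (S z + S' z) = N z := by
    intro z
    have h1 := hSsq z
    have h2 := hS'sq z
    simp only [hNdef]
    linear_combination h1 - h2
  have hDpos : ∀ z, 0 < S z + S' z := fun z => by positivity
  have hF : ∀ z, S z - S' z = N z / (S z + S' z) := by
    intro z; rw [eq_div_iff (hDpos z).ne']; exact hNz z
  have hdec : (S x - S' x) - (S x₀ - S' x₀)
      = (N x - N x₀)/(S x + S' x)
        + N x₀ * ((S x₀ + S' x₀) - (S x + S' x)) / ((S x + S' x) * (S x₀ + S' x₀)) := by
    rw [hF x, hF x₀]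
    have h1 := (hDpos x).ne'
    have h2 := (hDpos x₀).ne'
    rw [div_sub_div _ _ h1 h2, div_add_div _ _ h1 (mul_ne_zero h1 h2),
      div_eq_div_iff (mul_ne_zero h1 h2) (mul_ne_zero h1 (mul_ne_zero h1 h2))]
    ring
  have hNdiff : |N x - N x₀| ≤ 2 * ‖y - y'‖ * ‖x - x₀‖ / A := by
    have hid : N x - N x₀ = 2 * ⟪x - x₀, y' - y⟫ / A := by
      rw [hNdef]; simp only
      have e : ∀ a c : E n, ‖a - c‖^2 = ‖a‖^2 - 2*⟪a,c⟫ + ‖c‖^2 := fun a c => norm_sub_sq_real a c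
      rw [e x y, e x y', e x₀ y, e x₀ y']
      simp only [inner_sub_left, inner_sub_right]
      ring
    rw [hid]
    rw [abs_div, abs_of_pos hA]
    gcongr
    calc |2 * ⟪x - x₀, y' - y⟫| = 2 * |⟪x - x₀, y' - y⟫| := by
          rw [abs_mul, abs_of_pos (by norm_num : (0:ℝ) < 2)]
      _ ≤ 2 * (‖x - x₀‖ * ‖y' - y‖) := by
          gcongr; exact abs_real_inner_le_norm _ _
      _ = 2 * ‖y - y'‖ * ‖x - x₀‖ := by rw [norm_sub_rev y' y]; ring
  have hSd0 : |S x₀ - S' x₀| ≤ |b - b'|/A + ‖y - y'‖/sA := by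
    set M := Real.sqrt ((b'/A)^2 + ‖x₀ - y‖^2/A)
    have h1 : |S x₀ - M| ≤ |b/A - b'/A| :=
      abs_sqrt_sub_sqrt (by positivity) (by positivity) (by positivity)
    have h2 : |M - S' x₀| ≤ |‖x₀ - y‖/sA - ‖x₀ - y'‖/sA| := by
      have hrw : ∀ d : ℝ, (b'/A)^2 + d^2/A = (d/sA)^2 + (b'/A)^2 := by
        intro d
        have h : (d/sA)^2 = d^2/A := by rw [div_pow, hsA2]
        rw [h]; ring
      have := abs_sqrt_sub_sqrt (p := ‖x₀ - y‖/sA) (q := ‖x₀ - y'‖/sA) (c := (b'/A)^2)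
        (by positivity) (by positivity) (by positivity)
      rw [show M = Real.sqrt ((‖x₀ - y‖/sA)^2 + (b'/A)^2) by rw [← hrw],
        show S' x₀ = Real.sqrt ((‖x₀ - y'‖/sA)^2 + (b'/A)^2) by rw [hS'def]; simp only; rw [← hrw]]
      exact this
    have h3 : |‖x₀ - y‖/sA - ‖x₀ - y'‖/sA| ≤ ‖y - y'‖/sA := by
      rw [div_sub_div_same, abs_div, abs_of_pos hsA]
      gcongr
      calc |‖x₀ - y‖ - ‖x₀ - y'‖| ≤ ‖(x₀ - y) - (x₀ - y')‖ := abs_norm_sub_norm_le _ _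
        _ = ‖y - y'‖ := by rw [show (x₀ - y) - (x₀ - y') = -(y - y') by abel, norm_neg]
    have h4 : |b/A - b'/A| = |b - b'|/A := by rw [div_sub_div_same, abs_div, abs_of_pos hA]
    calc |S x₀ - S' x₀| ≤ |S x₀ - M| + |M - S' x₀| := abs_sub_le _ _ _
      _ ≤ |b - b'|/A + ‖y - y'‖/sA := by rw [← h4]; exact add_le_add h1 (h2.trans h3)
  have hN0 : |N x₀| ≤ (|b - b'|/A + ‖y - y'‖/sA) * (S x₀ + S' x₀) := by
    rw [← hNz x₀, abs_mul, abs_of_pos (hDpos x₀)]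
    exact mul_le_mul_of_nonneg_right hSd0 (hDpos x₀).le
  have hSlip : ∀ (c : ℝ) (w : E n), 0 ≤ c →
      |Real.sqrt (c + ‖x₀ - w‖^2/A) - Real.sqrt (c + ‖x - w‖^2/A)| ≤ ‖x - x₀‖/sA := by
    intro c w hc
    have hrw : ∀ d : ℝ, c + d^2/A = (d/sA)^2 + c := by
      intro d
      have h : (d/sA)^2 = d^2/A := by rw [div_pow, hsA2]
      rw [h]; ring
    rw [hrw, hrw]
    refine (abs_sqrt_sub_sqrt (by positivity) (by positivity) hc).trans ?_
    rw [div_sub_div_same, abs_div, abs_of_pos hsA]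
    gcongr
    calc |‖x₀ - w‖ - ‖x - w‖| ≤ ‖(x₀ - w) - (x - w)‖ := abs_norm_sub_norm_le _ _
      _ = ‖x - x₀‖ := by rw [show (x₀ - w) - (x - w) = -(x - x₀) by abel, norm_neg]
  have hDdiff : |(S x₀ + S' x₀) - (S x + S' x)| ≤ 2 * ‖x - x₀‖/sA := by
    have h1 : |S x₀ - S x| ≤ ‖x - x₀‖/sA := hSlip ((b/A)^2) y (by positivity)
    have h2 : |S' x₀ - S' x| ≤ ‖x - x₀‖/sA := hSlip ((b'/A)^2) y' (by positivity)
    calc |(S x₀ + S' x₀) - (S x + S' x)|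
        = |(S x₀ - S x) + (S' x₀ - S' x)| := by
          rw [show (S x₀ + S' x₀) - (S x + S' x) = (S x₀ - S x) + (S' x₀ - S' x) by ring]
      _ ≤ |S x₀ - S x| + |S' x₀ - S' x| := abs_add_le _ _
      _ ≤ ‖x - x₀‖/sA + ‖x - x₀‖/sA := add_le_add h1 h2
      _ = 2 * ‖x - x₀‖/sA := by ring
  set r := ‖x - x₀‖
  set dy := ‖y - y'‖
  set db := |b - b'|
  have hr : 0 ≤ r := norm_nonneg _
  have hdy : 0 ≤ dy := norm_nonneg _
  have hdb : 0 ≤ db := abs_nonneg _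
  have hDx : 2*b₀/A ≤ S x + S' x := by
    have := hSlb x; have := hS'lb x; rw [show 2*b₀/A = b₀/A + b₀/A by ring]; linarith
  have hDx0 : 2*b₀/A ≤ S x₀ + S' x₀ := by
    have := hSlb x₀; have := hS'lb x₀; rw [show 2*b₀/A = b₀/A + b₀/A by ring]; linarith
  have hb₀A2 : (0:ℝ) < 2*b₀/A := by positivity
  calc |(S x - S' x) - (S x₀ - S' x₀)|
      ≤ |N x - N x₀|/(S x + S' x)
        + |N x₀| * |(S x₀ + S' x₀) - (S x + S' x)| / ((S x + S' x) * (S x₀ + S' x₀)) := by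
        rw [hdec]
        refine (abs_add_le _ _).trans ?_
        rw [abs_div, abs_of_pos (hDpos x), abs_div, abs_mul,
          abs_of_pos (by positivity : 0 < (S x + S' x) * (S x₀ + S' x₀))]
    _ ≤ (2 * dy * r / A)/(2*b₀/A)
        + ((db/A + dy/sA) * (S x₀ + S' x₀)) * (2 * r/sA) / ((2*b₀/A) * (S x₀ + S' x₀)) := by
        have term1 : |N x - N x₀|/(S x + S' x) ≤ (2 * dy * r / A)/(2*b₀/A) :=
          div_le_div₀ (by positivity) hNdiff hb₀A2 hDx
        have term2 : |N x₀| * |(S x₀ + S' x₀) - (S x + S' x)| / ((S x + S' x) * (S x₀ + S' x₀))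
            ≤ ((db/A + dy/sA) * (S x₀ + S' x₀)) * (2 * r/sA) / ((2*b₀/A) * (S x₀ + S' x₀)) := by
          apply div_le_div₀ (by positivity)
            (mul_le_mul hN0 hDdiff (abs_nonneg _) (by positivity))
            (by positivity)
            (mul_le_mul_of_nonneg_right hDx (hDpos x₀).le)
        exact add_le_add term1 term2
    _ = ((db / sA + 2 * dy) / b₀) * r := by
        have hD0ne : (S x₀ + S' x₀) ≠ 0 := (hDpos x₀).ne'
        have hsAne : sA ≠ 0 := hsA.ne'
        have hb₀ne : b₀ ≠ 0 := hb₀.ne'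
        rw [← hsA2]
        field_simp
        ring

end Aux

set_option maxHeartbeats 4000000 in
/-- the key Taylor-type lower bound for u − φ near a point from which
the target is regular. -/
theorem stmt_15 {n : ℕ} (hn : 1 ≤ n) (κ : ℝ) (hκ : 1 < κ)
    (Ω : Set (E n)) (hΩo : IsOpen Ω) (hΩconv : Convex ℝ Ω)
    (hΩb : Bornology.IsBounded Ω) (hΩne : Ω.Nonempty)
    (Tgt : Set (E n × ℝ)) (hTc : IsCompact Tgt) (hTne : Tgt.Nonempty)
    (τ₀ τ₁ ω Δ : ℝ) (hτ₀ : 0 < τ₀) (hτ : τ₀ < τ₁) (hω : 0 < ω) (hΔpos : 0 < Δ)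
    (hslab : ∀ Y ∈ Tgt, Y.2 ∈ Set.Icc τ₁ (τ₁ + ω))
    (hΔ : ∀ Y ∈ Tgt, Metric.diam (Ω ∪ {Y.1}) ≤ Δ)
    (hcompat : max (κ * τ₀) (τ₀ + κ * Δ / (κ - 1)) ≤ τ₁)
    (u : E n → ℝ) (hurange : ∀ x ∈ Ω, u x ∈ Set.Icc 0 τ₀)
    (hu : ∀ x₀ ∈ Ω, ∃ Y ∈ Tgt, ∃ b : ℝ, 0 < b ∧
      b < κ * Y.2 - Real.sqrt (Y.2 ^ 2 + Δ ^ 2) ∧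
      (∀ x ∈ Ω, hypb κ Y b x ≤ u x) ∧ u x₀ = hypb κ Y b x₀)
    (sfun : (E n × ℝ) → (E n × ℝ) → ℝ)
    (hspos : ∀ X d, 0 < sfun X d)
    (hslip : ∀ X : E n × ℝ, ∃ K : NNReal, LipschitzWith K (sfun X))
    (hparam : ∀ X : E n × ℝ, X.1 ∈ Ω → X.2 ∈ Set.Icc 0 τ₀ → ∀ Y ∈ Tgt,
      ∃ d : E n × ℝ, pnorm d = 1 ∧ Y = X + sfun X d • d)
    (xstar : E n) (hxstar : xstar ∈ Ω)
    (hreg : ∃ U ∈ nhds ((xstar, u xstar) : E n × ℝ), ∃ c₁ : ℝ, 0 < c₁ ∧ ∃ c₂ : ℝ, 0 < c₂ ∧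
      ∀ Yb ∈ Tgt, ∀ Yh ∈ Tgt, ∀ Z ∈ U, ∀ lam ∈ Set.Icc (1/4 : ℝ) (3/4),
        ∀ x ∈ Ω, ‖x - Z.1‖ ≤ c₂ →
          hyp κ x (YZlam κ sfun Z Yb Yh lam) Z
            ≤ max (hyp κ x Yb Z) (hyp κ x Yh Z)
              - c₁ * (pnorm (Yb - Yh)) ^ 2 * ‖x - Z.1‖ ^ 2)
    : ∃ δ : ℝ, 0 < δ ∧ ∃ C₁ : ℝ, 0 < C₁ ∧ ∃ C₂ : ℝ, 0 < C₂ ∧ ∃ C : ℝ, 0 < C ∧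
      Metric.ball xstar δ ⊆ Ω ∧
      ∀ xb ∈ Metric.ball xstar δ, ∀ xh ∈ Metric.ball xstar δ,
        ∀ Yb ∈ Fu κ Ω Tgt u xb, ∀ Yh ∈ Fu κ Ω Tgt u xh,
          ‖xb - xh‖ ≤ pnorm (Yb - Yh) →
          ∃ x₀ ∈ segment ℝ xb xh,
            ∀ lam ∈ Set.Icc (1/4 : ℝ) (3/4),
              YZlam κ sfun (x₀, u x₀) Yb Yh lam ∈ Tgt →
              ∀ Y ∈ Tgt, ∀ x ∈ Ω ∩ Metric.ball x₀ C₂,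
                -C * pnorm (Yb - Yh) * ‖xb - xh‖
                  - C * pnorm (YZlam κ sfun (x₀, u x₀) Yb Yh lam - Y) * ‖x - x₀‖
                  + C₁ * pnorm (Yb - Yh) ^ 2 * ‖x - x₀‖ ^ 2
                ≤ u x - hyp κ x Y (x₀, u x₀) := by
  classical
  obtain ⟨U, hU, c₁, hc₁, c₂, hc₂, hregm⟩ := hreg
  have hA : (0:ℝ) < κ^2 - 1 := by nlinarith
  have hsA : 0 < Real.sqrt (κ^2 - 1) := Real.sqrt_pos.mpr hA
  have hκ0 : (0:ℝ) < κ := by linarith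
  -- u is Lipschitz on Ω with constant 1/√(κ²-1)
  have hulip : ∀ x ∈ Ω, ∀ x' ∈ Ω, u x - u x' ≤ ‖x - x'‖ / Real.sqrt (κ^2 - 1) := by
    intro x hx x' hx'
    obtain ⟨Y, hY, b, hb0, hb1, hsupp, heq⟩ := hu x hx
    have h1 := hsupp x' hx'
    have h2 := (abs_le.mp (hypb_lip_x hκ Y b x x')).2
    rw [heq]
    linarith only [h1, h2]
  have hulip2 : ∀ x ∈ Ω, ∀ x' ∈ Ω, |u x - u x'| ≤ ‖x - x'‖ / Real.sqrt (κ^2 - 1) := by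
    intro x hx x' hx'
    rw [abs_sub_le_iff]
    refine ⟨hulip x hx x' hx', ?_⟩
    have h := hulip x' hx' x hx
    rw [norm_sub_rev] at h
    exact h
  -- positive lower bound for all relevant values of c(·,·)
  obtain ⟨b₀, hb₀def⟩ : ∃ t : ℝ, t = (κ - 1) * Δ := ⟨_, rfl⟩
  have hb₀ : 0 < b₀ := by
    rw [hb₀def]; exact mul_pos (by linarith only [hκ]) hΔpos
  have hble : ∀ x ∈ Ω, ∀ Y ∈ Tgt, b₀ ≤ cfun κ (x, u x) Y := by
    intro x hx Y hY
    have hY2 := hslab Y hY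
    have hux := hurange x hx
    have hτ₁ : τ₀ + κ * Δ / (κ - 1) ≤ τ₁ := le_trans (le_max_right _ _) hcompat
    have hxy : ‖x - Y.1‖ ≤ Δ := by
      have hbd : Bornology.IsBounded (Ω ∪ {Y.1}) :=
        hΩb.union Bornology.isBounded_singleton
      have hd := Metric.dist_le_diam_of_mem hbd (Set.mem_union_left _ hx)
        (Set.mem_union_right _ rfl)
      rw [dist_eq_norm] at hd
      exact hd.trans (hΔ Y hY)
    have hp : pnorm ((x, u x) - Y) ≤ ‖x - Y.1‖ + (Y.2 - u x) := by
      have h1 := pn.le_add ((x, u x) - Y)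
      have h2 : ((x, u x) - Y).1 = x - Y.1 := rfl
      have h3 : ((x, u x) - Y).2 = u x - Y.2 := rfl
      rw [h2, h3] at h1
      have h4 : |u x - Y.2| = Y.2 - u x := by
        rw [abs_of_nonpos (by linarith only [hY2.1, hux.2, hτ] : u x - Y.2 ≤ 0)]; ring
      rw [h4] at h1
      exact h1
    have hkey : κ * Δ ≤ (κ - 1) * (τ₁ - τ₀) := by
      have h5 : κ * Δ / (κ - 1) ≤ τ₁ - τ₀ := by linarith only [hτ₁]
      have hne : κ - 1 ≠ 0 := ne_of_gt (by linarith only [hκ])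
      have hid : (κ - 1) * (κ * Δ / (κ - 1)) = κ * Δ := by field_simp
      have hh := mul_le_mul_of_nonneg_left h5 (by linarith only [hκ] : (0:ℝ) ≤ κ - 1)
      linarith only [hh, hid]
    have hc : cfun κ (x, u x) Y = κ * (Y.2 - u x) - pnorm ((x, u x) - Y) := rfl
    have h6 : τ₁ - τ₀ ≤ Y.2 - u x := by
      linarith only [hY2.1, hux.2]
    have h7 : (κ - 1) * (τ₁ - τ₀) ≤ (κ - 1) * (Y.2 - u x) :=
      mul_le_mul_of_nonneg_left h6 (by linarith only [hκ])
    rw [hc, hb₀def]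
    linarith only [hp, hxy, h7, hkey]
  -- choice of δ
  obtain ⟨δ₀, hδ₀, hballΩ⟩ := Metric.isOpen_iff.mp hΩo xstar hxstar
  obtain ⟨ε, hε, hballU⟩ := Metric.mem_nhds_iff.mp hU
  obtain ⟨δ, hδdef⟩ : ∃ t : ℝ, t = min δ₀ (ε * Real.sqrt (κ^2 - 1) / (2 * (Real.sqrt (κ^2 - 1) + 1))) := ⟨_, rfl⟩
  have hδ : 0 < δ := by rw [hδdef]; exact lt_min hδ₀ (by positivity)
  have hsubΩ : Metric.ball xstar δ ⊆ Ω := by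
    rw [hδdef]
    exact fun z hz => hballΩ (Metric.ball_subset_ball (min_le_left _ _) hz)
  have hZU : ∀ x ∈ Metric.ball xstar δ, ((x, u x) : E n × ℝ) ∈ U := by
    intro x hx
    apply hballU
    have hxΩ : x ∈ Ω := hsubΩ hx
    rw [Metric.mem_ball] at hx ⊢
    rw [Prod.dist_eq]
    have hδ2 : δ ≤ ε * Real.sqrt (κ^2 - 1) / (2 * (Real.sqrt (κ^2 - 1) + 1)) := by
      rw [hδdef]; exact min_le_right _ _
    have h1 : dist x xstar < ε := by
      have : ε * Real.sqrt (κ^2 - 1) / (2 * (Real.sqrt (κ^2 - 1) + 1)) < ε := by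
        rw [div_lt_iff₀ (by positivity)]
        linarith only [hε, mul_pos hε hsA]
      linarith only [this, hx, hδ2]
    have h2 : dist (u x) (u xstar) < ε := by
      rw [Real.dist_eq]
      have ha := hulip2 x hxΩ xstar hxstar
      have hb : ‖x - xstar‖ < δ := by rw [← dist_eq_norm]; exact hx
      have hc : ‖x - xstar‖ / Real.sqrt (κ^2 - 1) < δ / Real.sqrt (κ^2 - 1) := by
        exact (div_lt_div_iff_of_pos_right hsA).mpr hb
      have hd : δ / Real.sqrt (κ^2 - 1) ≤ ε * Real.sqrt (κ^2 - 1) / (2 * (Real.sqrt (κ^2 - 1) + 1)) / Real.sqrt (κ^2 - 1) := by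
        exact (div_le_div_iff_of_pos_right hsA).mpr hδ2
      have he : ε * Real.sqrt (κ^2 - 1) / (2 * (Real.sqrt (κ^2 - 1) + 1)) / Real.sqrt (κ^2 - 1) < ε := by
        rw [div_div, div_lt_iff₀ (by positivity)]
        linarith only [mul_pos hε hsA, mul_pos (mul_pos hε hsA) hsA]
      calc |u x - u xstar| ≤ ‖x - xstar‖ / Real.sqrt (κ^2 - 1) := ha
        _ < δ / Real.sqrt (κ^2 - 1) := hc
        _ ≤ ε * Real.sqrt (κ^2 - 1) / (2 * (Real.sqrt (κ^2 - 1) + 1)) / Real.sqrt (κ^2 - 1) := hd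
        _ < ε := he
    exact max_lt h1 h2
  -- the constants
  obtain ⟨Ka, hKadef⟩ : ∃ t : ℝ, t = ((κ + 1) / Real.sqrt (κ^2 - 1) + 2) / b₀ := ⟨_, rfl⟩
  have hKapos : 0 < Ka := by
    rw [hKadef]
    apply div_pos ?_ hb₀
    have hh : 0 < (κ + 1)/Real.sqrt (κ^2 - 1) := div_pos (by linarith only [hκ]) hsA
    linarith only [hh]
  obtain ⟨Ke, hKedef⟩ : ∃ t : ℝ, t = ((κ + 2 + (κ + 1) / Real.sqrt (κ^2 - 1)) / Real.sqrt (κ^2 - 1) + 2) / b₀ := ⟨_, rfl⟩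
  have hKepos : 0 < Ke := by
    rw [hKedef]
    apply div_pos ?_ hb₀
    have h1 : 0 < (κ + 1)/Real.sqrt (κ^2 - 1) := div_pos (by linarith only [hκ]) hsA
    have h2 : 0 < (κ + 2 + (κ + 1)/Real.sqrt (κ^2 - 1))/Real.sqrt (κ^2 - 1) := div_pos (by linarith only [hκ, h1]) hsA
    linarith only [h2]
  have hcoef : 0 ≤ (κ + 1) * c₂ / (Real.sqrt (κ^2 - 1) * b₀) :=
    div_nonneg (mul_nonneg (by linarith only [hκ]) hc₂.le) (mul_nonneg hsA.le hb₀.le)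
  obtain ⟨Cst, hCstdef⟩ : ∃ t : ℝ, t = (1 + (κ + 1) * c₂ / (Real.sqrt (κ^2 - 1) * b₀)) * Ke := ⟨_, rfl⟩
  have hCstpos : 0 < Cst := by
    rw [hCstdef]
    apply mul_pos (by linarith only [hcoef]) hKepos
  refine ⟨δ, hδ, c₁, hc₁, c₂, hc₂, Cst + Ka + 1, by linarith only [hCstpos, hKapos], hsubΩ, ?_⟩
  intro xb hxb xh hxh Yb hYb Yh hYh hBA
  have hxbΩ : xb ∈ Ω := hsubΩ hxb
  have hxhΩ : xh ∈ Ω := hsubΩ hxh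
  obtain ⟨hYbT, hYbs⟩ := hYb
  obtain ⟨hYhT, hYhs⟩ := hYh
  refine ⟨xb, left_mem_segment ℝ xb xh, ?_⟩
  intro lam hlam hYlT Y hY x hx
  obtain ⟨hxΩ, hxball⟩ := hx
  obtain ⟨Yl, hYldef⟩ : ∃ W : E n × ℝ, W = YZlam κ sfun (xb, u xb) Yb Yh lam := ⟨_, rfl⟩
  rw [← hYldef] at hYlT ⊢
  -- basic quantities
  have hr0 : (0:ℝ) ≤ ‖x - xb‖ := norm_nonneg _
  have hB0 : (0:ℝ) ≤ ‖xb - xh‖ := norm_nonneg _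
  have hAn0 : 0 ≤ pnorm (Yb - Yh) := pn.nonneg _
  have hD0 : 0 ≤ pnorm (Yl - Y) := pn.nonneg _
  have hrc₂ : ‖x - xb‖ ≤ c₂ := by
    rw [← dist_eq_norm]
    exact le_of_lt (Metric.mem_ball.mp hxball)
  -- the four relevant values of c are ≥ b₀
  have hbY : b₀ ≤ cfun κ (xb, u xb) Y := hble xb hxbΩ Y hY
  have hbYl : b₀ ≤ cfun κ (xb, u xb) Yl := hble xb hxbΩ Yl hYlT
  have hbYb : b₀ ≤ cfun κ (xb, u xb) Yb := hble xb hxbΩ Yb hYbT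
  have hbYh : b₀ ≤ cfun κ (xb, u xb) Yh := hble xb hxbΩ Yh hYhT
  have hbYhh : b₀ ≤ cfun κ (xh, u xh) Yh := hble xh hxhΩ Yh hYhT
  -- base identities
  have hbase : ∀ W : E n × ℝ, hyp κ xb W (xb, u xb) = u xb :=
    fun W => hyp_base hκ xb (u xb) W
  have hbaseh : hyp κ xh Yh (xh, u xh) = u xh := hyp_base hκ xh (u xh) Yh
  -- step (c)
  have step_c : hyp κ x Yb (xb, u xb) ≤ u x := hYbs x hxΩ
  -- e₀ and its properties
  obtain ⟨e₀, he₀def⟩ : ∃ t : ℝ, t = u xb - hyp κ xb Yh (xh, u xh) := ⟨_, rfl⟩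
  have he₀0 : 0 ≤ e₀ := by
    have := hYhs xb hxbΩ
    rw [he₀def]; linarith only [this]
  -- step (e) : e₀ ≤ Ke * |Yb - Yh| * |xb - xh|
  have hfst : ∀ P Q : E n × ℝ, (P - Q).1 = P.1 - Q.1 := fun P Q => rfl
  have hsnd : ∀ P Q : E n × ℝ, (P - Q).2 = P.2 - Q.2 := fun P Q => rfl
  have hYbh1 : ‖Yb.1 - Yh.1‖ ≤ pnorm (Yb - Yh) := by
    have := pn.fst_le (Yb - Yh); rw [hfst] at this; exact this
  have hYbh2 : |Yb.2 - Yh.2| ≤ pnorm (Yb - Yh) := by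
    have := pn.snd_le (Yb - Yh); rw [hsnd] at this; exact this
  have huxbh : |u xb - u xh| ≤ ‖xb - xh‖ / Real.sqrt (κ^2 - 1) := hulip2 xb hxbΩ xh hxhΩ
  have hZXh : pnorm ((xb, u xb) - ((xh, u xh) : E n × ℝ))
      ≤ ‖xb - xh‖ + ‖xb - xh‖ / Real.sqrt (κ^2 - 1) := by
    have h1 := pn.le_add ((xb, u xb) - ((xh, u xh) : E n × ℝ))
    have h2 : ((xb, u xb) - ((xh, u xh) : E n × ℝ)).1 = xb - xh := rfl
    have h3 : ((xb, u xb) - ((xh, u xh) : E n × ℝ)).2 = u xb - u xh := rfl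
    rw [h2, h3] at h1
    linarith only [h1, huxbh]
  have hcdiff : |cfun κ (xb, u xb) Yb - cfun κ (xh, u xh) Yh|
      ≤ (κ + 2 + (κ + 1) / Real.sqrt (κ^2 - 1)) * pnorm (Yb - Yh) := by
    have cE1 : cfun κ (xb, u xb) Yb = κ * (Yb.2 - u xb) - pnorm ((xb, u xb) - Yb) := rfl
    have cE2 : cfun κ (xh, u xh) Yh = κ * (Yh.2 - u xh) - pnorm ((xh, u xh) - Yh) := rfl
    have expand : cfun κ (xb, u xb) Yb - cfun κ (xh, u xh) Yh
        = κ * (Yb.2 - Yh.2) - κ * (u xb - u xh)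
          - (pnorm ((xb, u xb) - Yb) - pnorm ((xh, u xh) - Yh)) := by
      rw [cE1, cE2]; ring
    have hpp : |pnorm ((xb, u xb) - Yb) - pnorm ((xh, u xh) - Yh)|
        ≤ pnorm ((xb, u xb) - ((xh, u xh) : E n × ℝ)) + pnorm (Yb - Yh) := by
      have h1 := pn.abs_sub ((xb, u xb) - Yb) ((xh, u xh) - Yh)
      have h2 : ((xb, u xb) - Yb) - ((xh, u xh) - Yh)
          = ((xb, u xb) - ((xh, u xh) : E n × ℝ)) - (Yb - Yh) := by abel
      rw [h2] at h1
      exact h1.trans (pn.sub_le _ _)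
    rw [expand]
    have t0 : |κ * (Yb.2 - Yh.2) - κ * (u xb - u xh)
        - (pnorm ((xb, u xb) - Yb) - pnorm ((xh, u xh) - Yh))|
        ≤ |κ * (Yb.2 - Yh.2)| + |κ * (u xb - u xh)|
          + |pnorm ((xb, u xb) - Yb) - pnorm ((xh, u xh) - Yh)| := by
      have u1 := abs_sub (κ * (Yb.2 - Yh.2) - κ * (u xb - u xh))
        (pnorm ((xb, u xb) - Yb) - pnorm ((xh, u xh) - Yh))
      have u2 := abs_sub (κ * (Yb.2 - Yh.2)) (κ * (u xb - u xh))
      linarith only [u1, u2]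
    have t1 : |κ * (Yb.2 - Yh.2)| ≤ κ * pnorm (Yb - Yh) := by
      rw [abs_mul, abs_of_pos hκ0]
      exact mul_le_mul_of_nonneg_left hYbh2 hκ0.le
    have t2 : |κ * (u xb - u xh)| ≤ κ * (‖xb - xh‖ / Real.sqrt (κ^2 - 1)) := by
      rw [abs_mul, abs_of_pos hκ0]
      exact mul_le_mul_of_nonneg_left huxbh hκ0.le
    have hBsA : ‖xb - xh‖ / Real.sqrt (κ^2 - 1) ≤ pnorm (Yb - Yh) / Real.sqrt (κ^2 - 1) :=
      (div_le_div_iff_of_pos_right hsA).mpr hBA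
    have hBAn : ‖xb - xh‖ ≤ pnorm (Yb - Yh) := hBA
    have t3 : κ * (‖xb - xh‖ / Real.sqrt (κ^2 - 1)) ≤ κ * (pnorm (Yb - Yh) / Real.sqrt (κ^2 - 1)) :=
      mul_le_mul_of_nonneg_left hBsA hκ0.le
    have goalexpand : (κ + 2 + (κ + 1) / Real.sqrt (κ^2 - 1)) * pnorm (Yb - Yh)
        = κ * pnorm (Yb - Yh) + κ * (pnorm (Yb - Yh) / Real.sqrt (κ^2 - 1))
          + ((pnorm (Yb - Yh) + pnorm (Yb - Yh) / Real.sqrt (κ^2 - 1)) + pnorm (Yb - Yh)) := by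
      ring
    rw [goalexpand]
    have t4 : pnorm ((xb, u xb) - ((xh, u xh) : E n × ℝ))
        ≤ pnorm (Yb - Yh) + pnorm (Yb - Yh) / Real.sqrt (κ^2 - 1) := by
      refine hZXh.trans ?_
      linarith only [hBsA, hBAn]
    linarith only [t0, t1, t2, t3, hpp, t4]
  have hψ : |(hyp κ xb Yb (xb, u xb) - hyp κ xb Yh (xh, u xh))
        - (hyp κ xh Yb (xb, u xb) - hyp κ xh Yh (xh, u xh))|
      ≤ ((|cfun κ (xb, u xb) Yb - cfun κ (xh, u xh) Yh| / Real.sqrt (κ^2 - 1)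
          + 2 * ‖Yb.1 - Yh.1‖) / b₀) * ‖xb - xh‖ :=
    key_lip hκ hb₀ hbYb hbYhh Yb Yh xb xh
  have he₀ub : e₀ ≤ Ke * pnorm (Yb - Yh) * ‖xb - xh‖ := by
    have h1 : hyp κ xb Yb (xb, u xb) = u xb := hbase Yb
    have h2 : hyp κ xh Yb (xb, u xb) ≤ u xh := hYbs xh hxhΩ
    have habs := (abs_le.mp hψ).2
    have hnum : (|cfun κ (xb, u xb) Yb - cfun κ (xh, u xh) Yh| / Real.sqrt (κ^2 - 1)
          + 2 * ‖Yb.1 - Yh.1‖) / b₀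
        ≤ Ke * pnorm (Yb - Yh) := by
      have n1 : |cfun κ (xb, u xb) Yb - cfun κ (xh, u xh) Yh| / Real.sqrt (κ^2 - 1)
          ≤ ((κ + 2 + (κ + 1) / Real.sqrt (κ^2 - 1)) * pnorm (Yb - Yh)) / Real.sqrt (κ^2 - 1) :=
        (div_le_div_iff_of_pos_right hsA).mpr hcdiff
      have n2 : 2 * ‖Yb.1 - Yh.1‖ ≤ 2 * pnorm (Yb - Yh) := by linarith only [hYbh1]
      have n3 : (|cfun κ (xb, u xb) Yb - cfun κ (xh, u xh) Yh| / Real.sqrt (κ^2 - 1)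
            + 2 * ‖Yb.1 - Yh.1‖)
          ≤ ((κ + 2 + (κ + 1) / Real.sqrt (κ^2 - 1)) / Real.sqrt (κ^2 - 1) + 2) * pnorm (Yb - Yh) := by
        have e1 : ((κ + 2 + (κ + 1) / Real.sqrt (κ^2 - 1)) / Real.sqrt (κ^2 - 1) + 2) * pnorm (Yb - Yh)
            = ((κ + 2 + (κ + 1) / Real.sqrt (κ^2 - 1)) * pnorm (Yb - Yh)) / Real.sqrt (κ^2 - 1)
              + 2 * pnorm (Yb - Yh) := by ring
        rw [e1]
        linarith only [n1, n2]
      have n4 : (|cfun κ (xb, u xb) Yb - cfun κ (xh, u xh) Yh| / Real.sqrt (κ^2 - 1)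
            + 2 * ‖Yb.1 - Yh.1‖) / b₀
          ≤ (((κ + 2 + (κ + 1) / Real.sqrt (κ^2 - 1)) / Real.sqrt (κ^2 - 1) + 2) * pnorm (Yb - Yh)) / b₀ :=
        (div_le_div_iff_of_pos_right hb₀).mpr n3
      rw [hKedef]
      calc (|cfun κ (xb, u xb) Yb - cfun κ (xh, u xh) Yh| / Real.sqrt (κ^2 - 1)
            + 2 * ‖Yb.1 - Yh.1‖) / b₀
          ≤ (((κ + 2 + (κ + 1) / Real.sqrt (κ^2 - 1)) / Real.sqrt (κ^2 - 1) + 2) * pnorm (Yb - Yh)) / b₀ := n4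
        _ = ((κ + 2 + (κ + 1) / Real.sqrt (κ^2 - 1)) / Real.sqrt (κ^2 - 1) + 2) / b₀ * pnorm (Yb - Yh) := by ring
    have hmul : ((|cfun κ (xb, u xb) Yb - cfun κ (xh, u xh) Yh| / Real.sqrt (κ^2 - 1)
          + 2 * ‖Yb.1 - Yh.1‖) / b₀) * ‖xb - xh‖
        ≤ (Ke * pnorm (Yb - Yh)) * ‖xb - xh‖ :=
      mul_le_mul_of_nonneg_right hnum hB0
    rw [he₀def]
    have heq : e₀ = (hyp κ xb Yb (xb, u xb) - hyp κ xb Yh (xh, u xh)) := by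
      rw [he₀def, h1]
    linarith only [habs, hmul, h2, hbaseh, h1, heq]
  -- step (d): hyp κ x Yh (xb, u xb) ≤ u x + (1 + (κ+1)c₂/(Real.sqrt (κ^2 - 1) b₀)) e₀
  have hd0 : hyp κ xb Yh (xb, u xb) = u xb := hbase Yh
  have hbs0 : (0:ℝ) ≤ cfun κ (xb, u xb) Yh := le_trans hb₀.le hbYh
  have hbh0 : (0:ℝ) ≤ cfun κ (xh, u xh) Yh := le_trans hb₀.le hbYhh
  have hbsbh : |cfun κ (xb, u xb) Yh - cfun κ (xh, u xh) Yh| ≤ (κ + 1) * e₀ := by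
    have h := b_recover hκ Yh hbs0 hbh0 xb
    have hv : |hypb κ Yh (cfun κ (xb, u xb) Yh) xb - hypb κ Yh (cfun κ (xh, u xh) Yh) xb|
        = e₀ := by
      have e1 : hypb κ Yh (cfun κ (xb, u xb) Yh) xb = u xb := hd0
      have e2 : hypb κ Yh (cfun κ (xh, u xh) Yh) xb = u xb - e₀ := by
        have : hyp κ xb Yh (xh, u xh) = u xb - e₀ := by rw [he₀def]; ring
        exact this
      rw [e1, e2, show u xb - (u xb - e₀) = e₀ by ring, abs_of_nonneg he₀0]
    rw [hv] at h
    exact h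
  have hdlip : |(hyp κ x Yh (xb, u xb) - hyp κ x Yh (xh, u xh))
        - (hyp κ xb Yh (xb, u xb) - hyp κ xb Yh (xh, u xh))|
      ≤ ((|cfun κ (xb, u xb) Yh - cfun κ (xh, u xh) Yh| / Real.sqrt (κ^2 - 1)
          + 2 * ‖Yh.1 - Yh.1‖) / b₀) * ‖x - xb‖ :=
    key_lip hκ hb₀ hbYh hbYhh Yh Yh x xb
  have step_d : hyp κ x Yh (xb, u xb)
      ≤ u x + (1 + (κ + 1) * c₂ / (Real.sqrt (κ^2 - 1) * b₀)) * e₀ := by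
    have hz : ‖Yh.1 - Yh.1‖ = 0 := by simp
    have hbr : (hyp κ xb Yh (xb, u xb) - hyp κ xb Yh (xh, u xh)) = e₀ := by
      rw [hd0, he₀def]
    have habs := (abs_le.mp hdlip).2
    rw [hbr, hz] at habs
    have hub : ((|cfun κ (xb, u xb) Yh - cfun κ (xh, u xh) Yh| / Real.sqrt (κ^2 - 1) + 2 * 0) / b₀) * ‖x - xb‖
        ≤ ((κ + 1) * c₂ / (Real.sqrt (κ^2 - 1) * b₀)) * e₀ := by
      have m1 : (|cfun κ (xb, u xb) Yh - cfun κ (xh, u xh) Yh| / Real.sqrt (κ^2 - 1) + 2 * 0) / b₀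
          ≤ (((κ + 1) * e₀) / Real.sqrt (κ^2 - 1)) / b₀ := by
        have h1' := (div_le_div_iff_of_pos_right hsA).mpr hbsbh
        have h2 := (div_le_div_iff_of_pos_right hb₀).mpr h1'
        calc (|cfun κ (xb, u xb) Yh - cfun κ (xh, u xh) Yh| / Real.sqrt (κ^2 - 1) + 2 * 0) / b₀
            = (|cfun κ (xb, u xb) Yh - cfun κ (xh, u xh) Yh| / Real.sqrt (κ^2 - 1)) / b₀ := by ring
          _ ≤ (((κ + 1) * e₀) / Real.sqrt (κ^2 - 1)) / b₀ := h2
      have m0 : 0 ≤ (((κ + 1) * e₀) / Real.sqrt (κ^2 - 1)) / b₀ := by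
        apply div_nonneg (div_nonneg (mul_nonneg (by linarith only [hκ]) he₀0) hsA.le) hb₀.le
      have m2 : ((|cfun κ (xb, u xb) Yh - cfun κ (xh, u xh) Yh| / Real.sqrt (κ^2 - 1) + 2 * 0) / b₀) * ‖x - xb‖
          ≤ ((((κ + 1) * e₀) / Real.sqrt (κ^2 - 1)) / b₀) * c₂ := by
        apply mul_le_mul m1 hrc₂ hr0 m0
      refine m2.trans ?_
      rw [show ((((κ + 1) * e₀) / Real.sqrt (κ^2 - 1)) / b₀) * c₂ = ((κ + 1) * c₂ / (Real.sqrt (κ^2 - 1) * b₀)) * e₀ by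
        ring]
    have hYhx : hyp κ x Yh (xh, u xh) ≤ u x := hYhs x hxΩ
    linarith only [habs, hub, hYhx]
  -- step (b): the regularity inequality at Z = (xb, u xb)
  have step_b : hyp κ x Yl (xb, u xb)
      ≤ max (hyp κ x Yb (xb, u xb)) (hyp κ x Yh (xb, u xb))
        - c₁ * (pnorm (Yb - Yh))^2 * ‖x - xb‖^2 := by
    have h := hregm Yb hYbT Yh hYhT (xb, u xb) (hZU xb hxb) lam hlam x hxΩ
      (by exact hrc₂)
    rw [← hYldef] at h
    exact h
  -- step (a): replacing Yl by an arbitrary Y ∈ Tgt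
  have hYlY2 : |(cfun κ (xb, u xb) Y) - (cfun κ (xb, u xb) Yl)| ≤ (κ + 1) * pnorm (Yl - Y) := by
    have cE3 : cfun κ (xb, u xb) Y = κ * (Y.2 - u xb) - pnorm ((xb, u xb) - Y) := rfl
    have cE4 : cfun κ (xb, u xb) Yl = κ * (Yl.2 - u xb) - pnorm ((xb, u xb) - Yl) := rfl
    have expand : cfun κ (xb, u xb) Y - cfun κ (xb, u xb) Yl
        = κ * (Y.2 - Yl.2)
          - (pnorm ((xb, u xb) - Y) - pnorm ((xb, u xb) - Yl)) := by
      rw [cE3, cE4]; ring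
    have hpp : |pnorm ((xb, u xb) - Y) - pnorm ((xb, u xb) - Yl)| ≤ pnorm (Yl - Y) := by
      have h1 := pn.abs_sub ((xb, u xb) - Y) ((xb, u xb) - Yl)
      have h2 : ((xb, u xb) - Y) - ((xb, u xb) - Yl) = Yl - Y := by abel
      rw [h2] at h1
      exact h1
    have h2 : |Y.2 - Yl.2| ≤ pnorm (Yl - Y) := by
      have := pn.snd_le (Yl - Y); rw [hsnd] at this
      rw [abs_sub_comm]
      exact this
    have t0 : |κ * (Y.2 - Yl.2) - (pnorm ((xb, u xb) - Y) - pnorm ((xb, u xb) - Yl))|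
        ≤ |κ * (Y.2 - Yl.2)| + |pnorm ((xb, u xb) - Y) - pnorm ((xb, u xb) - Yl)| :=
      abs_sub _ _
    have t1 : |κ * (Y.2 - Yl.2)| ≤ κ * pnorm (Yl - Y) := by
      rw [abs_mul, abs_of_pos hκ0]
      exact mul_le_mul_of_nonneg_left h2 hκ0.le
    rw [expand]
    linarith only [t0, t1, hpp]
  have hYlY1 : ‖Y.1 - Yl.1‖ ≤ pnorm (Yl - Y) := by
    have := pn.fst_le (Yl - Y); rw [hfst] at this
    rw [norm_sub_rev]
    exact this
  have halip : |(hyp κ x Y (xb, u xb) - hyp κ x Yl (xb, u xb))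
        - (hyp κ xb Y (xb, u xb) - hyp κ xb Yl (xb, u xb))|
      ≤ ((|cfun κ (xb, u xb) Y - cfun κ (xb, u xb) Yl| / Real.sqrt (κ^2 - 1)
          + 2 * ‖Y.1 - Yl.1‖) / b₀) * ‖x - xb‖ :=
    key_lip hκ hb₀ hbY hbYl Y Yl x xb
  have step_a : hyp κ x Y (xb, u xb)
      ≤ hyp κ x Yl (xb, u xb) + Ka * pnorm (Yl - Y) * ‖x - xb‖ := by
    have hbr : hyp κ xb Y (xb, u xb) - hyp κ xb Yl (xb, u xb) = 0 := by
      rw [hbase Y, hbase Yl]; ring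
    have habs := (abs_le.mp halip).2
    rw [hbr] at habs
    have hnum : (|cfun κ (xb, u xb) Y - cfun κ (xb, u xb) Yl| / Real.sqrt (κ^2 - 1)
          + 2 * ‖Y.1 - Yl.1‖) / b₀ ≤ Ka * pnorm (Yl - Y) := by
      have n1 : |cfun κ (xb, u xb) Y - cfun κ (xb, u xb) Yl| / Real.sqrt (κ^2 - 1)
          ≤ ((κ + 1) * pnorm (Yl - Y)) / Real.sqrt (κ^2 - 1) :=
        (div_le_div_iff_of_pos_right hsA).mpr hYlY2
      have n3 : (|cfun κ (xb, u xb) Y - cfun κ (xb, u xb) Yl| / Real.sqrt (κ^2 - 1) + 2 * ‖Y.1 - Yl.1‖)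
          ≤ ((κ + 1) / Real.sqrt (κ^2 - 1) + 2) * pnorm (Yl - Y) := by
        have e1 : ((κ + 1) / Real.sqrt (κ^2 - 1) + 2) * pnorm (Yl - Y)
            = ((κ + 1) * pnorm (Yl - Y)) / Real.sqrt (κ^2 - 1) + 2 * pnorm (Yl - Y) := by ring
        rw [e1]
        have n2' : 2 * ‖Y.1 - Yl.1‖ ≤ 2 * pnorm (Yl - Y) := by linarith only [hYlY1]
        linarith only [n1, n2']
      have n4 := (div_le_div_iff_of_pos_right hb₀).mpr n3
      rw [hKadef]
      refine n4.trans ?_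
      rw [show (((κ + 1) / Real.sqrt (κ^2 - 1) + 2) * pnorm (Yl - Y)) / b₀
        = ((κ + 1) / Real.sqrt (κ^2 - 1) + 2) / b₀ * pnorm (Yl - Y) by ring]
    have hmul := mul_le_mul_of_nonneg_right hnum hr0
    linarith only [habs, hmul]
  -- assembling everything
  have hmax : max (hyp κ x Yb (xb, u xb)) (hyp κ x Yh (xb, u xb))
      ≤ u x + (1 + (κ + 1) * c₂ / (Real.sqrt (κ^2 - 1) * b₀)) * e₀ := by
    apply max_le
    · have hnn : 0 ≤ (1 + (κ + 1) * c₂ / (Real.sqrt (κ^2 - 1) * b₀)) * e₀ :=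
        mul_nonneg (by linarith only [hcoef]) he₀0
      linarith only [hnn, step_c]
    · exact step_d
  have hfin1 : (1 + (κ + 1) * c₂ / (Real.sqrt (κ^2 - 1) * b₀)) * e₀
      ≤ Cst * pnorm (Yb - Yh) * ‖xb - xh‖ := by
    rw [hCstdef]
    calc (1 + (κ + 1) * c₂ / (Real.sqrt (κ^2 - 1) * b₀)) * e₀
        ≤ (1 + (κ + 1) * c₂ / (Real.sqrt (κ^2 - 1) * b₀)) * (Ke * pnorm (Yb - Yh) * ‖xb - xh‖) :=
          mul_le_mul_of_nonneg_left he₀ub (by linarith only [hcoef])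
      _ = (1 + (κ + 1) * c₂ / (Real.sqrt (κ^2 - 1) * b₀)) * Ke * pnorm (Yb - Yh) * ‖xb - xh‖ := by ring
  have hAB0 : 0 ≤ pnorm (Yb - Yh) * ‖xb - xh‖ := mul_nonneg hAn0 hB0
  have hDr0 : 0 ≤ pnorm (Yl - Y) * ‖x - xb‖ := mul_nonneg hD0 hr0
  have hC1 : Cst * pnorm (Yb - Yh) * ‖xb - xh‖
      ≤ (Cst + Ka + 1) * pnorm (Yb - Yh) * ‖xb - xh‖ := by
    have h := mul_nonneg (by linarith only [hKapos] : (0:ℝ) ≤ Ka + 1) hAB0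
    linarith only [h]
  have hC2 : Ka * pnorm (Yl - Y) * ‖x - xb‖
      ≤ (Cst + Ka + 1) * pnorm (Yl - Y) * ‖x - xb‖ := by
    have h := mul_nonneg (by linarith only [hCstpos] : (0:ℝ) ≤ Cst + 1) hDr0
    linarith only [h]
  linarith only [step_a, step_b, hmax, hfin1, hC1, hC2]
end
end
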